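/- arXiv:2201.12442 — 6 statements merged into one kernel-verified Lean document; each statement's English description precedes it below -/
import Mathlib

section
/- Let M be a matroid of rank r on ground set E and let S ⊆ E with |S| ≥ r, S containing no basis of M, and rank(S) < r−1. Then the family B(M) ∪ {T ⊆ S : |T| = r} fails the basis exchange axiom; i.e., S cannot be relaxed. -/
/-- The rank of a set `X` in a matroid `M` is less than `k`: every independent subset of `X`
has cardinality less than `k`. -/
def Matroid.RankLt {α : Type*} (M : Matroid α) (X : Set α) (k : ℕ) : Prop :=
  ∀ I ⊆ X, M.Indep I → I.ncard < k

/-- A family of sets satisfies the basis exchange axiom if for all members `B, B'` and all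
`e ∈ B \ B'` there is `e' ∈ B' \ B` with `(B \ {e}) ∪ {e'}` in the family. -/
def ExchangeAxiom {α : Type*} (𝓑 : Set α → Prop) : Prop :=
  ∀ B B', 𝓑 B → 𝓑 B' → ∀ e ∈ B \ B', ∃ e' ∈ B' \ B, 𝓑 ((B \ {e}) ∪ {e'})

/-- Let `M` be a matroid of rank `r` on ground set `E` and let `S ⊆ E` with `|S| ≥ r`,
`S` containing no basis of `M`, and `rank(S) < r − 1`.  Then the family
`B(M) ∪ {T ⊆ S : |T| = r}` fails the basis exchange axiom; i.e. `S` cannot be relaxed. -/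
theorem stmt_3 {α : Type*} (M : Matroid α) [M.Finite] (r : ℕ)
    (hrank : ∀ B, M.IsBase B → B.ncard = r)
    (S : Set α) (hSE : S ⊆ M.E) (hScard : r ≤ S.ncard)
    (hnobase : ∀ B ⊆ S, ¬ M.IsBase B)
    (hrkS : M.RankLt S (r - 1)) :
    ¬ ExchangeAxiom (fun B => M.IsBase B ∨ (B ⊆ S ∧ B.ncard = r)) := by
  intro hex
  have hEfin : M.E.Finite := M.ground_finite
  have hSfin : S.Finite := hEfin.subset hSE
  obtain ⟨B, hB⟩ := M.exists_isBase
  have hBfin : B.Finite := hEfin.subset hB.subset_ground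
  have hBr : B.ncard = r := hrank B hB
  rcases Nat.eq_zero_or_pos r with hr0 | hrpos
  · have hBe : B = ∅ := by
      rw [← Set.ncard_eq_zero hBfin]; omega
    exact hnobase B (hBe ▸ Set.empty_subset S) hB
  obtain ⟨T, hTS, hTr⟩ := Set.exists_subset_card_eq hScard
  have key : ∀ n (T : Set α), T ⊆ S → T.ncard = r → (T \ B).ncard = n → False := by
    intro n
    induction n using Nat.strong_induction_on with
    | _ n ih =>
      intro T hTS hTr hn
      have hTfin : T.Finite := hSfin.subset hTS
      by_cases hTB : (T \ B) = ∅
      · have hTeq : T = B :=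
          Set.eq_of_subset_of_ncard_le (Set.diff_eq_empty.mp hTB) (by omega) hBfin
        exact hnobase T hTS (hTeq ▸ hB)
      · obtain ⟨e, he⟩ := Set.nonempty_iff_ne_empty.mpr hTB
        have hnpos : 0 < n := by
          rw [← hn, Set.ncard_pos hTfin.diff]
          exact ⟨e, he⟩
        obtain ⟨e', he', hnew⟩ := hex T B (Or.inr ⟨hTS, hTr⟩) (Or.inl hB) e he
        rcases hnew with hbase | ⟨hsub, hcard⟩
        · have hind : M.Indep (T \ {e}) := hbase.indep.subset Set.subset_union_left
          have hcard' : (T \ {e}).ncard = r - 1 := by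
            rw [Set.ncard_diff_singleton_of_mem he.1, hTr]
          have := hrkS (T \ {e}) (Set.diff_subset.trans hTS) hind
          omega
        · have hT'B : ((T \ {e}) ∪ {e'}) \ B = (T \ B) \ {e} := by
            have he'B : e' ∈ B := he'.1
            ext x
            simp only [Set.mem_diff, Set.mem_union, Set.mem_singleton_iff]
            constructor
            · rintro ⟨(⟨hx, hxe⟩ | rfl), hxB⟩
              · exact ⟨⟨hx, hxB⟩, hxe⟩
              · exact absurd he'B hxB
            · rintro ⟨⟨hx, hxB⟩, hxe⟩
              exact ⟨Or.inl ⟨hx, hxe⟩, hxB⟩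
          have hlt : (((T \ {e}) ∪ {e'}) \ B).ncard < n := by
            rw [hT'B, Set.ncard_diff_singleton_of_mem he, hn]
            omega
          exact ih _ hlt _ hsub hcard rfl
  exact key _ T hTS hTr rfl
end

section
/- Let r ≤ s < n. The base polytope of the panhandle matroid Pan_{r,s,n}, i.e., the convex hull in ℝⁿ of the indicator vectors of the r-subsets B of [n] with |B ∩ [s]| ≥ r−1, equals { x ∈ [0,1]ⁿ : x_1 + ⋯ + x_n = r and x_{s+1} + ⋯ + x_n ≤ 1 }. -/
open Finset

/-- The panhandle polytope. -/
def panP (r s n : ℕ) : Set (Fin n → ℝ) :=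
  {x : Fin n → ℝ | (∀ i, 0 ≤ x i ∧ x i ≤ 1) ∧ (∑ i, x i) = r ∧
    (∑ i ∈ Finset.univ.filter (fun j : Fin n => s ≤ (j : ℕ)), x i) ≤ 1}

lemma pan_convex (r s n : ℕ) : Convex ℝ (panP r s n) := by
  rintro x ⟨hx01, hxs, hxt⟩ y ⟨hy01, hys, hyt⟩ a b ha hb hab
  refine ⟨fun i => ?_, ?_, ?_⟩
  · constructor
    · have := (hx01 i).1; have := (hy01 i).1; simp only [Pi.add_apply, Pi.smul_apply,
        smul_eq_mul]; nlinarith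
    · have := (hx01 i).2; have := (hy01 i).2; simp only [Pi.add_apply, Pi.smul_apply,
        smul_eq_mul]; nlinarith
  · simp only [Pi.add_apply, Pi.smul_apply, smul_eq_mul, Finset.sum_add_distrib,
      ← Finset.mul_sum, hxs, hys]
    nlinarith
  · simp only [Pi.add_apply, Pi.smul_apply, smul_eq_mul, Finset.sum_add_distrib,
      ← Finset.mul_sum]
    nlinarith

lemma pan_compact (r s n : ℕ) : IsCompact (panP r s n) := by
  have h1 : IsCompact (Set.pi Set.univ (fun _ : Fin n => Set.Icc (0:ℝ) 1)) :=
    isCompact_univ_pi fun _ => isCompact_Icc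
  apply h1.of_isClosed_subset
  · have c1 : IsClosed {x : Fin n → ℝ | ∀ i, 0 ≤ x i ∧ x i ≤ 1} := by
      have : {x : Fin n → ℝ | ∀ i, 0 ≤ x i ∧ x i ≤ 1}
          = Set.pi Set.univ (fun _ : Fin n => Set.Icc (0:ℝ) 1) := by
        ext x
        simp only [Set.mem_setOf_eq, Set.mem_pi, Set.mem_univ, Set.mem_Icc, true_implies]
      rw [this]
      exact isClosed_set_pi fun _ _ => isClosed_Icc
    have c2 : IsClosed {x : Fin n → ℝ | (∑ i, x i) = (r:ℝ)} :=
      isClosed_eq (by continuity) continuous_const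
    have c3 : IsClosed {x : Fin n → ℝ |
        (∑ i ∈ Finset.univ.filter (fun j : Fin n => s ≤ (j : ℕ)), x i) ≤ 1} :=
      isClosed_le (by continuity) continuous_const
    exact (c1.inter (c2.inter c3))
  · rintro x ⟨hx01, -, -⟩
    simp only [Set.mem_pi, Set.mem_univ, Set.mem_Icc, true_imp_iff]
    exact hx01

/-- Sum of 0/1 values over a finset is the number of ones. -/
lemma sum01 {n : ℕ} (A : Finset (Fin n)) (x : Fin n → ℝ)
    (h : ∀ k ∈ A, x k = 0 ∨ x k = 1) :
    ∑ k ∈ A, x k = ((A.filter fun k => x k = 1).card : ℝ) := by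
  rw [Finset.card_filter]
  push_cast
  refine Finset.sum_congr rfl fun k hk => ?_
  rcases h k hk with h0 | h1
  · rw [if_neg (by rw [h0]; norm_num), h0]
  · rw [if_pos h1, h1]

/-- Perturbation lemma: if `x ± d` both lie in `P` and `d ≠ 0` at some coordinate,
then `x` is not an extreme point of `P`. -/
lemma not_extreme {n : ℕ} {P : Set (Fin n → ℝ)} {x d : Fin n → ℝ} (i : Fin n)
    (hdi : d i ≠ 0) (h1 : x + d ∈ P) (h2 : x - d ∈ P) : x ∉ P.extremePoints ℝ := by
  intro hx
  rw [mem_extremePoints] at hx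
  have hseg : x ∈ openSegment ℝ (x + d) (x - d) := by
    refine ⟨1/2, 1/2, by norm_num, by norm_num, by norm_num, ?_⟩
    module
  have h := (hx.2 (x + d) h1 (x - d) h2 hseg).1
  have := congrFun h i
  simp only [Pi.add_apply] at this
  exact hdi (by linarith)

lemma sum_dir {n : ℕ} (A : Finset (Fin n)) (i j : Fin n) (ε : ℝ) :
    ∑ k ∈ A, ((if k = i then ε else 0) + (if k = j then -ε else 0)) =
      (if i ∈ A then ε else 0) + (if j ∈ A then -ε else 0) := by
  rw [Finset.sum_add_distrib, Finset.sum_ite_eq' A i fun _ => ε,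
    Finset.sum_ite_eq' A j fun _ => -ε]

/-- Case A: two fractional coordinates on the same side. -/
lemma pan_not_extreme_same {r s n : ℕ} {x : Fin n → ℝ} (hx : x ∈ panP r s n)
    {i j : Fin n} (hij : i ≠ j) (hi0 : 0 < x i) (hi1 : x i < 1)
    (hj0 : 0 < x j) (hj1 : x j < 1)
    (hside : (s ≤ (i:ℕ)) ↔ (s ≤ (j:ℕ))) :
    x ∉ (panP r s n).extremePoints ℝ := by
  obtain ⟨h01, hsum, htail⟩ := hx
  set ε := min (min (x i) (1 - x i)) (min (x j) (1 - x j)) with hε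
  have hε0 : 0 < ε := lt_min (lt_min hi0 (by linarith)) (lt_min hj0 (by linarith))
  have e1 : ε ≤ x i := le_trans (min_le_left _ _) (min_le_left _ _)
  have e2 : ε ≤ 1 - x i := le_trans (min_le_left _ _) (min_le_right _ _)
  have e3 : ε ≤ x j := le_trans (min_le_right _ _) (min_le_left _ _)
  have e4 : ε ≤ 1 - x j := le_trans (min_le_right _ _) (min_le_right _ _)
  set d : Fin n → ℝ := fun k => (if k = i then ε else 0) + (if k = j then -ε else 0) with hd
  have dvali : d i = ε := by simp [hd, hij]
  have dvalj : d j = -ε := by simp [hd, hij.symm]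
  have dval0 : ∀ k, k ≠ i → k ≠ j → d k = 0 := by intro k h1 h2; simp [hd, h1, h2]
  have hdsum : ∀ A : Finset (Fin n), ∑ k ∈ A, d k =
      (if i ∈ A then ε else 0) + (if j ∈ A then -ε else 0) := fun A => sum_dir A i j ε
  have hcoord : ∀ (σ : ℝ), σ = 1 ∨ σ = -1 → ∀ k, 0 ≤ x k + σ * d k ∧ x k + σ * d k ≤ 1 := by
    intro σ hσ k
    rcases eq_or_ne k i with rfl | hki
    · rw [dvali]; rcases hσ with rfl | rfl <;> constructor <;> linarith
    · rcases eq_or_ne k j with rfl | hkj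
      · rw [dvalj]; rcases hσ with rfl | rfl <;> constructor <;> linarith
      · rw [dval0 k hki hkj]; rcases hσ with rfl | rfl <;>
          simpa using ⟨(h01 k).1, (h01 k).2⟩
  have htail_d : ∑ k ∈ Finset.univ.filter (fun j : Fin n => s ≤ (j : ℕ)), d k = 0 := by
    rw [hdsum]
    by_cases hsi : s ≤ (i:ℕ)
    · simp [Finset.mem_filter, hsi, hside.mp hsi]
    · have hsj : ¬ s ≤ (j:ℕ) := fun h => hsi (hside.mpr h)
      simp [Finset.mem_filter, hsi, hsj]
  have htot_d : ∑ k, d k = 0 := by rw [hdsum]; simp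
  refine not_extreme (d := d) i ?_ ?_ ?_
  · rw [dvali]; exact ne_of_gt hε0
  · refine ⟨fun k => ?_, ?_, ?_⟩
    · have h := hcoord 1 (Or.inl rfl) k
      rw [one_mul] at h
      exact h
    · simp only [Pi.add_apply, Finset.sum_add_distrib, htot_d, hsum, add_zero]
    · simp only [Pi.add_apply, Finset.sum_add_distrib, htail_d, add_zero]; exact htail
  · refine ⟨fun k => ?_, ?_, ?_⟩
    · have h := hcoord (-1) (Or.inr rfl) k
      rw [neg_one_mul, ← sub_eq_add_neg] at h
      exact h
    · simp only [Pi.sub_apply, Finset.sum_sub_distrib, htot_d, hsum, sub_zero]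
    · simp only [Pi.sub_apply, Finset.sum_sub_distrib, htail_d, sub_zero]; exact htail

/-- Case B: one fractional coordinate on each side, tail sum `< 1`. -/
lemma pan_not_extreme_diff {r s n : ℕ} {x : Fin n → ℝ} (hx : x ∈ panP r s n)
    {i j : Fin n} (hij : i ≠ j) (hi0 : 0 < x i) (hi1 : x i < 1)
    (hj0 : 0 < x j) (hj1 : x j < 1)
    (hsi : ¬ s ≤ (i:ℕ)) (hsj : s ≤ (j:ℕ))
    (hT : ∑ k ∈ Finset.univ.filter (fun j : Fin n => s ≤ (j : ℕ)), x k < 1) :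
    x ∉ (panP r s n).extremePoints ℝ := by
  obtain ⟨h01, hsum, htail⟩ := hx
  set T := ∑ k ∈ Finset.univ.filter (fun j : Fin n => s ≤ (j : ℕ)), x k with hTdef
  set ε := min (min (min (x i) (1 - x i)) (min (x j) (1 - x j))) (1 - T) with hε
  have hε0 : 0 < ε :=
    lt_min (lt_min (lt_min hi0 (by linarith)) (lt_min hj0 (by linarith))) (by linarith)
  have e1 : ε ≤ x i := le_trans (min_le_left _ _) (le_trans (min_le_left _ _) (min_le_left _ _))
  have e2 : ε ≤ 1 - x i :=
    le_trans (min_le_left _ _) (le_trans (min_le_left _ _) (min_le_right _ _))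
  have e3 : ε ≤ x j := le_trans (min_le_left _ _) (le_trans (min_le_right _ _) (min_le_left _ _))
  have e4 : ε ≤ 1 - x j :=
    le_trans (min_le_left _ _) (le_trans (min_le_right _ _) (min_le_right _ _))
  have e5 : ε ≤ 1 - T := min_le_right _ _
  set d : Fin n → ℝ := fun k => (if k = i then ε else 0) + (if k = j then -ε else 0) with hd
  have dvali : d i = ε := by simp [hd, hij]
  have dvalj : d j = -ε := by simp [hd, hij.symm]
  have dval0 : ∀ k, k ≠ i → k ≠ j → d k = 0 := by intro k h1 h2; simp [hd, h1, h2]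
  have hdsum : ∀ A : Finset (Fin n), ∑ k ∈ A, d k =
      (if i ∈ A then ε else 0) + (if j ∈ A then -ε else 0) := fun A => sum_dir A i j ε
  have hcoord : ∀ (σ : ℝ), σ = 1 ∨ σ = -1 → ∀ k, 0 ≤ x k + σ * d k ∧ x k + σ * d k ≤ 1 := by
    intro σ hσ k
    rcases eq_or_ne k i with rfl | hki
    · rw [dvali]; rcases hσ with rfl | rfl <;> constructor <;> linarith
    · rcases eq_or_ne k j with rfl | hkj
      · rw [dvalj]; rcases hσ with rfl | rfl <;> constructor <;> linarith
      · rw [dval0 k hki hkj]; rcases hσ with rfl | rfl <;>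
          simpa using ⟨(h01 k).1, (h01 k).2⟩
  have htail_d : ∑ k ∈ Finset.univ.filter (fun j : Fin n => s ≤ (j : ℕ)), d k = -ε := by
    rw [hdsum]
    simp [Finset.mem_filter, hsi, hsj]
  have htot_d : ∑ k, d k = 0 := by rw [hdsum]; simp
  refine not_extreme (d := d) i ?_ ?_ ?_
  · rw [dvali]; exact ne_of_gt hε0
  · refine ⟨fun k => ?_, ?_, ?_⟩
    · have h := hcoord 1 (Or.inl rfl) k
      rw [one_mul] at h
      exact h
    · simp only [Pi.add_apply, Finset.sum_add_distrib, htot_d, hsum, add_zero]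
    · simp only [Pi.add_apply, Finset.sum_add_distrib, htail_d, ← hTdef]
      linarith
  · refine ⟨fun k => ?_, ?_, ?_⟩
    · have h := hcoord (-1) (Or.inr rfl) k
      rw [neg_one_mul, ← sub_eq_add_neg] at h
      exact h
    · simp only [Pi.sub_apply, Finset.sum_sub_distrib, htot_d, hsum, sub_zero]
    · simp only [Pi.sub_apply, Finset.sum_sub_distrib, htail_d, ← hTdef]
      linarith

/-- Extreme points of the panhandle polytope are 0/1 vectors. -/
lemma pan_extreme_01 {r s n : ℕ} {x : Fin n → ℝ}
    (hx : x ∈ (panP r s n).extremePoints ℝ) : ∀ k, x k = 0 ∨ x k = 1 := by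
  obtain ⟨h01, hsum, htail⟩ := hx.1
  have to01 : ∀ m, ¬(0 < x m ∧ x m < 1) → x m = 0 ∨ x m = 1 := by
    intro m hm
    rcases (h01 m).1.eq_or_lt with h | h
    · exact Or.inl h.symm
    · rcases (h01 m).2.eq_or_lt with h' | h'
      · exact Or.inr h'
      · exact absurd ⟨h, h'⟩ hm
  intro k
  by_contra hk
  have hkfrac : 0 < x k ∧ x k < 1 := by
    rcases (h01 k).1.eq_or_lt with h | h
    · exact absurd (Or.inl h.symm) hk
    · rcases (h01 k).2.eq_or_lt with h' | h'
      · exact absurd (Or.inr h') hk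
      · exact ⟨h, h'⟩
  -- there is a second fractional coordinate
  have h2 : ∃ j, j ≠ k ∧ 0 < x j ∧ x j < 1 := by
    by_contra hno
    push_neg at hno
    have hO : ∀ m ∈ Finset.univ.erase k, x m = 0 ∨ x m = 1 := by
      intro m hm
      have hmk : m ≠ k := (Finset.mem_erase.mp hm).1
      exact to01 m (fun h => (hno m hmk h.1).not_gt h.2)
    have hsplit : x k + ∑ m ∈ Finset.univ.erase k, x m = ∑ m, x m :=
      Finset.add_sum_erase _ _ (Finset.mem_univ k)
    rw [sum01 _ _ hO] at hsplit
    set c := ((Finset.univ.erase k).filter fun m => x m = 1).card with hc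
    have h1 : (c : ℝ) < r := by rw [← hsum, ← hsplit]; linarith [hkfrac.1]
    have h2 : (r : ℝ) < c + 1 := by rw [← hsum, ← hsplit]; linarith [hkfrac.2]
    have := Nat.cast_lt.mp h1
    have : r < c + 1 := by exact_mod_cast h2
    omega
  obtain ⟨j, hjk, hj0, hj1⟩ := h2
  by_cases hside : (s ≤ (k:ℕ)) ↔ (s ≤ (j:ℕ))
  · exact pan_not_extreme_same hx.1 (Ne.symm hjk) hkfrac.1 hkfrac.2 hj0 hj1 hside hx
  · -- sides differ: orient as head `h`, tail `t`
    rw [iff_iff_implies_and_implies, not_and_or] at hside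
    have horient : ∃ a b : Fin n, a ≠ b ∧ 0 < x a ∧ x a < 1 ∧ 0 < x b ∧ x b < 1 ∧
        ¬ s ≤ (a:ℕ) ∧ s ≤ (b:ℕ) := by
      rcases hside with h | h
      · push_neg at h
        exact ⟨j, k, hjk, hj0, hj1, hkfrac.1, hkfrac.2, not_le.mpr h.2, h.1⟩
      · push_neg at h
        exact ⟨k, j, Ne.symm hjk, hkfrac.1, hkfrac.2, hj0, hj1, not_le.mpr h.2, h.1⟩
    obtain ⟨a, b, hab, ha0, ha1, hb0, hb1, hsa, hsb⟩ := horient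
    -- every tail coordinate other than `b` is 0/1
    have hOtail : ∀ m ∈ (Finset.univ.filter (fun j : Fin n => s ≤ (j : ℕ))).erase b,
        x m = 0 ∨ x m = 1 := by
      intro m hm
      obtain ⟨hmb, hmf⟩ := Finset.mem_erase.mp hm
      have hsm : s ≤ (m:ℕ) := (Finset.mem_filter.mp hmf).2
      refine to01 m fun hmfrac => ?_
      exact pan_not_extreme_same hx.1 hmb hmfrac.1 hmfrac.2 hb0 hb1
        (iff_of_true hsm hsb) hx
    have hbmem : b ∈ Finset.univ.filter (fun j : Fin n => s ≤ (j : ℕ)) := by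
      simp [Finset.mem_filter, hsb]
    have hsplit : x b + ∑ m ∈ (Finset.univ.filter (fun j : Fin n => s ≤ (j : ℕ))).erase b,
        x m = ∑ m ∈ Finset.univ.filter (fun j : Fin n => s ≤ (j : ℕ)), x m :=
      Finset.add_sum_erase _ _ hbmem
    rw [sum01 _ _ hOtail] at hsplit
    set c := (((Finset.univ.filter (fun j : Fin n => s ≤ (j : ℕ))).erase b).filter
      fun m => x m = 1).card with hc
    have hc1 : (c : ℝ) < 1 := by
      have : x b + (c : ℝ) ≤ 1 := by rw [hsplit]; exact htail
      linarith
    have hc0 : c = 0 := by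
      have := Nat.cast_lt.mp (by exact_mod_cast hc1 : (c:ℝ) < ((1:ℕ):ℝ))
      omega
    have hT : ∑ m ∈ Finset.univ.filter (fun j : Fin n => s ≤ (j : ℕ)), x m < 1 := by
      rw [← hsplit, hc0]
      simpa using hb1
    exact pan_not_extreme_diff hx.1 hab ha0 ha1 hb0 hb1 hsa hsb hT hx

/-- The vertex set. -/
def panV (r s n : ℕ) : Set (Fin n → ℝ) :=
  {x : Fin n → ℝ | ∃ B : Finset (Fin n),
    B.card = r ∧ r - 1 ≤ (B.filter (fun j : Fin n => (j : ℕ) < s)).card ∧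
    x = fun i => if i ∈ B then 1 else 0}

lemma panV_finite (r s n : ℕ) : (panV r s n).Finite := by
  apply Set.Finite.subset
    (Set.finite_range (fun B : Finset (Fin n) => fun i => if i ∈ B then (1:ℝ) else 0))
  rintro x ⟨B, -, -, rfl⟩
  exact ⟨B, rfl⟩

lemma panV_subset (r s n : ℕ) (hr : 1 ≤ r) : panV r s n ⊆ panP r s n := by
  rintro x ⟨B, hBcard, hBhead, rfl⟩
  have hsumB : ∀ A : Finset (Fin n),
      (∑ i ∈ A, if i ∈ B then (1:ℝ) else 0) = ((A.filter (· ∈ B)).card : ℝ) := by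
    intro A
    rw [Finset.card_filter]
    push_cast
    rfl
  refine ⟨fun i => by by_cases h : i ∈ B <;> simp [h], ?_, ?_⟩
  · rw [hsumB]
    norm_cast
    rw [Finset.filter_univ_mem]
    exact hBcard
  · rw [hsumB]
    have key : ((Finset.univ.filter (fun j : Fin n => s ≤ (j : ℕ))).filter (· ∈ B)).card ≤ 1 := by
      have h1 : (Finset.univ.filter (fun j : Fin n => s ≤ (j : ℕ))).filter (· ∈ B)
          = B.filter (fun j : Fin n => ¬ (j:ℕ) < s) := by
        ext k
        simp [Finset.mem_filter, not_lt, and_comm]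
      have h2 := Finset.card_filter_add_card_filter_not
        (s := B) (p := fun j : Fin n => (j:ℕ) < s)
      simp only [not_lt] at h2
      rw [h1]
      simp only [not_lt]
      omega
    exact_mod_cast key

lemma pan_extreme_subset (r s n : ℕ) : (panP r s n).extremePoints ℝ ⊆ panV r s n := by
  intro x hx
  have h01 := pan_extreme_01 hx
  obtain ⟨hbnd, hsum, htail⟩ := hx.1
  set B := Finset.univ.filter (fun k => x k = 1) with hB
  have hxB : x = fun i => if i ∈ B then (1:ℝ) else 0 := by
    funext k
    rcases h01 k with h | h
    · rw [if_neg (by simp [hB, h])]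
      exact h
    · rw [if_pos (by simp [hB, h])]
      exact h
  have hBcard : B.card = r := by
    have := sum01 Finset.univ x (fun k _ => h01 k)
    rw [hsum] at this
    exact_mod_cast this.symm
  have htcard : ((Finset.univ.filter (fun j : Fin n => s ≤ (j : ℕ))).filter
      fun k => x k = 1).card ≤ 1 := by
    have := sum01 (Finset.univ.filter (fun j : Fin n => s ≤ (j : ℕ))) x (fun k _ => h01 k)
    rw [this] at htail
    exact_mod_cast htail
  refine ⟨B, hBcard, ?_, hxB⟩
  have h1 : (Finset.univ.filter (fun j : Fin n => s ≤ (j : ℕ))).filter (fun k => x k = 1)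
      = B.filter (fun j : Fin n => ¬ (j:ℕ) < s) := by
    ext k
    simp [hB, Finset.mem_filter, not_lt, and_comm]
  rw [h1] at htcard
  have h2 := Finset.card_filter_add_card_filter_not
    (s := B) (p := fun j : Fin n => (j:ℕ) < s)
  simp only [not_lt] at h2 htcard
  omega

/-- Let `r ≤ s < n`.  The base polytope of the panhandle matroid `Pan_{r,s,n}`, i.e. the
convex hull in `ℝⁿ` of the indicator vectors of the `r`-subsets `B` of `[n]` with
`|B ∩ [s]| ≥ r − 1`, equals
`{ x ∈ [0,1]ⁿ : x_1 + ⋯ + x_n = r and x_{s+1} + ⋯ + x_n ≤ 1 }`.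
(Here `[n]` is modelled on `Fin n`, with `[s]` the coordinates `< s`.) -/
theorem stmt_8 (r s n : ℕ) (hr : 1 ≤ r) (hrs : r ≤ s) (hsn : s < n) :
    convexHull ℝ {x : Fin n → ℝ | ∃ B : Finset (Fin n),
        B.card = r ∧ r - 1 ≤ (B.filter (fun j : Fin n => (j : ℕ) < s)).card ∧
        x = fun i => if i ∈ B then 1 else 0}
      = {x : Fin n → ℝ | (∀ i, 0 ≤ x i ∧ x i ≤ 1) ∧ (∑ i, x i) = r ∧
          (∑ i ∈ Finset.univ.filter (fun j : Fin n => s ≤ (j : ℕ)), x i) ≤ 1} := by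
  show convexHull ℝ (panV r s n) = panP r s n
  apply le_antisymm
  · exact convexHull_min (panV_subset r s n hr) (pan_convex r s n)
  · calc panP r s n
        = closure (convexHull ℝ ((panP r s n).extremePoints ℝ)) :=
          (closure_convexHull_extremePoints (pan_compact r s n) (pan_convex r s n)).symm
      _ ⊆ closure (convexHull ℝ (panV r s n)) :=
          closure_mono (convexHull_mono (pan_extreme_subset r s n))
      _ = convexHull ℝ (panV r s n) :=
          ((panV_finite r s n).isClosed_convexHull (𝕜 := ℝ)).closure_eq
end

section
/- For nonnegative integers and the product identity of binomial coefficients: C(Q,R)·C(S,T) = ∑_{U=0}^{T} C(R−Q+S, U) · C(T+Q−S, T−U) · C(Q+U, R+T), valid as an identity of polynomials in Q and S for fixed nonnegative integers R, T. -/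
open Finset Polynomial

def qchoose (x : ℚ) (k : ℕ) : ℚ :=
  (∏ j ∈ Finset.range k, (x - j)) / (Nat.factorial k : ℚ)

lemma qchoose_eq_ring_choose (x : ℚ) (k : ℕ) : qchoose x k = Ring.choose x k := by
  have h : (descPochhammer ℤ k).smeval x = ∏ j ∈ Finset.range k, (x - j) := by
    induction k with
    | zero => simp [descPochhammer_zero]
    | succ n ih =>
        rw [descPochhammer_succ_right, smeval_mul, ih, Finset.prod_range_succ]
        congr 1
        simp [smeval_sub, smeval_X, smeval_natCast]
  have h2 := Ring.descPochhammer_eq_factorial_smul_choose x k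
  rw [h] at h2
  rw [qchoose, h2, nsmul_eq_mul]
  field_simp

lemma vandermonde (x y : ℚ) (n : ℕ) :
    Ring.choose (x + y) n
      = ∑ k ∈ Finset.range (n + 1), Ring.choose x k * Ring.choose y (n - k) := by
  rw [Ring.add_choose_eq n (Commute.all x y),
    Finset.Nat.sum_antidiagonal_eq_sum_range_succ_mk]

lemma trinom (x : ℚ) (n k : ℕ) (h : k ≤ n) :
    (Nat.choose n k : ℚ) * Ring.choose x n
      = Ring.choose x k * Ring.choose (x - k) (n - k) := by
  have := Ring.choose_smul_choose x (n := n) (k := k) h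
  rwa [nsmul_eq_mul] at this

/-- Product identity of binomial coefficients (identity (5.28) of Graham–Knuth–Patashnik):
for fixed nonnegative integers `R, T`, as an identity of polynomials in `Q` and `S`
(equivalently, for all rational `Q` and `S`),
`C(Q,R)·C(S,T) = ∑_{U=0}^{T} C(R−Q+S, U) C(T+Q−S, T−U) C(Q+U, R+T)`. -/
theorem stmt_12 (R T : ℕ) (Q S : ℚ) :
    qchoose Q R * qchoose S T
      = ∑ U ∈ Finset.range (T + 1),
          qchoose ((R : ℚ) - Q + S) U * qchoose ((T : ℚ) + Q - S) (T - U) *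
            qchoose (Q + U) (R + T) := by
  simp only [qchoose_eq_ring_choose]
  set A : ℚ := (R : ℚ) - Q + S with hA
  set B : ℚ := (T : ℚ) + Q - S with hB
  set n : ℕ := R + T with hn
  symm
  -- Step 1: expand choose (Q+U) n by Vandermonde
  have step1 : ∀ U : ℕ, Ring.choose (Q + (U : ℚ)) n
      = ∑ k ∈ Finset.range (n + 1), (Nat.choose U k : ℚ) * Ring.choose Q (n - k) := by
    intro U
    rw [add_comm Q (U : ℚ), vandermonde]
    refine Finset.sum_congr rfl fun k _ => ?_
    rw [Ring.choose_natCast]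
  calc
    ∑ U ∈ Finset.range (T + 1),
        Ring.choose A U * Ring.choose B (T - U) * Ring.choose (Q + (U : ℚ)) n
      = ∑ U ∈ Finset.range (T + 1), ∑ k ∈ Finset.range (n + 1),
          ((Nat.choose U k : ℚ) * Ring.choose A U * Ring.choose B (T - U))
            * Ring.choose Q (n - k) := by
        refine Finset.sum_congr rfl fun U _ => ?_
        rw [step1, Finset.mul_sum]
        exact Finset.sum_congr rfl fun k _ => by ring
    _ = ∑ k ∈ Finset.range (n + 1),
          (∑ U ∈ Finset.range (T + 1),
            (Nat.choose U k : ℚ) * Ring.choose A U * Ring.choose B (T - U))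
            * Ring.choose Q (n - k) := by
        rw [Finset.sum_comm]
        exact Finset.sum_congr rfl fun k _ => by rw [Finset.sum_mul]
    _ = ∑ k ∈ Finset.range (T + 1),
          (∑ U ∈ Finset.range (T + 1),
            (Nat.choose U k : ℚ) * Ring.choose A U * Ring.choose B (T - U))
            * Ring.choose Q (n - k) := by
        symm
        refine Finset.sum_subset (Finset.range_subset_range.2 (by omega)) ?_
        intro k hk hk'
        have hTk : T < k := by
          simp only [Finset.mem_range] at hk hk' ⊢; omega
        have : (∑ U ∈ Finset.range (T + 1),
            (Nat.choose U k : ℚ) * Ring.choose A U * Ring.choose B (T - U)) = 0 := by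
          refine Finset.sum_eq_zero fun U hU => ?_
          have : Nat.choose U k = 0 :=
            Nat.choose_eq_zero_of_lt (by simp only [Finset.mem_range] at hU; omega)
          rw [this]; push_cast; ring
        rw [this, zero_mul]
    _ = ∑ k ∈ Finset.range (T + 1),
          Ring.choose A k * (Nat.choose (R + (T - k)) R : ℚ) * Ring.choose Q (n - k) := by
        refine Finset.sum_congr rfl fun k hk => ?_
        have hkT : k ≤ T := by simp only [Finset.mem_range] at hk; omega
        congr 1
        -- inner sum computation
        have e1 : ∑ U ∈ Finset.range (T + 1),
            (Nat.choose U k : ℚ) * Ring.choose A U * Ring.choose B (T - U)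
            = ∑ U ∈ Finset.Ico k (T + 1),
            (Nat.choose U k : ℚ) * Ring.choose A U * Ring.choose B (T - U) := by
          symm
          refine Finset.sum_subset ?_ ?_
          · rw [Finset.range_eq_Ico]
            exact Finset.Ico_subset_Ico (Nat.zero_le k) le_rfl
          · intro U hU hU'
            have : U < k := by
              simp only [Finset.mem_range, Finset.mem_Ico] at hU hU'; omega
            rw [Nat.choose_eq_zero_of_lt this]; push_cast; ring
        rw [e1, Finset.sum_Ico_eq_sum_range]
        have hrange : T + 1 - k = (T - k) + 1 := by omega
        rw [hrange]
        have e2 : ∀ v ∈ Finset.range ((T - k) + 1),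
            (Nat.choose (k + v) k : ℚ) * Ring.choose A (k + v) * Ring.choose B (T - (k + v))
            = Ring.choose A k * (Ring.choose (A - k) v * Ring.choose B ((T - k) - v)) := by
          intro v hv
          rw [trinom A (k + v) k (Nat.le_add_right k v), Nat.add_sub_cancel_left]
          have : T - (k + v) = (T - k) - v := by omega
          rw [this]; ring
        rw [Finset.sum_congr rfl e2, ← Finset.mul_sum, ← vandermonde]
        have hAB : A - (k : ℚ) + B = ((R + (T - k) : ℕ) : ℚ) := by
          push_cast [Nat.cast_sub hkT]; rw [hA, hB]; ring
        rw [hAB, Ring.choose_natCast, Nat.choose_symm_add]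
    _ = ∑ k ∈ Finset.range (T + 1),
          Ring.choose A k * (Ring.choose Q R * Ring.choose (Q - (R : ℚ)) (T - k)) := by
        refine Finset.sum_congr rfl fun k hk => ?_
        have hkT : k ≤ T := by simp only [Finset.mem_range] at hk; omega
        have hnk : n - k = R + (T - k) := by omega
        rw [hnk, mul_assoc, trinom Q (R + (T - k)) R (Nat.le_add_right R _),
          Nat.add_sub_cancel_left]
    _ = Ring.choose Q R * Ring.choose S T := by
        have e : ∀ k ∈ Finset.range (T + 1),
            Ring.choose A k * (Ring.choose Q R * Ring.choose (Q - (R : ℚ)) (T - k))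
            = Ring.choose Q R * (Ring.choose A k * Ring.choose (Q - (R : ℚ)) (T - k)) :=
          fun k _ => by ring
        rw [Finset.sum_congr rfl e, ← Finset.mul_sum, ← vandermonde]
        have : A + (Q - (R : ℚ)) = S := by rw [hA]; ring
        rw [this]
end

section
/- Worpitzky's identity: for every nonnegative integer m and every integer x, x^m = ∑_{a=0}^{m−1} A(m,a) · C(x+a, m), where A(m,a) is the Eulerian number counting permutations of [m] with exactly a descents (and for m = 0 the empty sum convention gives x^0 = 1 via the a = 0 term A(0,0)C(x,0)). -/
open Finset

/-- The Eulerian number `A(m, a)`: the number of permutations `w` of `[m]` with exactly `a`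
descents, where a descent is a position `i ∈ [m−1]` with `w(i) > w(i+1)`. -/
def eulerian (m a : ℕ) : ℕ :=
  (Finset.univ.filter (fun w : Equiv.Perm (Fin m) =>
    (Finset.univ.filter (fun i : Fin m => ∃ h : (i : ℕ) + 1 < m, w ⟨(i : ℕ) + 1, h⟩ < w i)).card = a)).card

namespace Worpitzky

/-- Number of descents of a permutation. -/
def des {m : ℕ} (w : Equiv.Perm (Fin m)) : ℕ :=
  (Finset.univ.filter (fun i : Fin m => ∃ h : (i : ℕ) + 1 < m, w ⟨(i : ℕ) + 1, h⟩ < w i)).card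

lemma eulerian_eq (m a : ℕ) :
    eulerian m a = (Finset.univ.filter (fun w : Equiv.Perm (Fin m) => des w = a)).card := rfl

/-- descent indicator at position `j` (as a natural number index) -/
def dInd {m : ℕ} (w : Equiv.Perm (Fin m)) (j : ℕ) : ℕ :=
  if h : j + 1 < m then (if w ⟨j + 1, h⟩ < w ⟨j, Nat.lt_of_succ_lt h⟩ then 1 else 0) else 0

lemma dInd_le_one {m : ℕ} (w : Equiv.Perm (Fin m)) (j : ℕ) : dInd w j ≤ 1 := by
  unfold dInd
  split
  · split <;> omega
  · omega

lemma dInd_eq_zero {m : ℕ} (w : Equiv.Perm (Fin m)) {j : ℕ} (h : m ≤ j + 1) : dInd w j = 0 := by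
  unfold dInd
  rw [dif_neg (by omega)]

lemma des_eq_sum {m : ℕ} (w : Equiv.Perm (Fin m)) : des w = ∑ j ∈ Finset.range m, dInd w j := by
  rw [des, Finset.card_filter, ← Fin.sum_univ_eq_sum_range (fun j => dInd w j) m]
  apply Finset.sum_congr rfl
  intro i _
  by_cases h : (i : ℕ) + 1 < m
  · rw [dInd, dif_pos h]
    apply if_congr _ rfl rfl
    constructor
    · rintro ⟨h', hq⟩; exact hq
    · intro hq; exact ⟨h, hq⟩
  · rw [dInd_eq_zero w (by omega), if_neg]
    rintro ⟨h', -⟩; exact h h'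

lemma des_le {m : ℕ} (w : Equiv.Perm (Fin m)) : des w ≤ m := by
  rw [des_eq_sum]
  calc ∑ j ∈ Finset.range m, dInd w j ≤ ∑ _j ∈ Finset.range m, 1 :=
        Finset.sum_le_sum fun j _ => dInd_le_one w j
    _ = m := by simp

lemma des_lt_max {m : ℕ} (w : Equiv.Perm (Fin m)) : des w < max m 1 := by
  cases m with
  | zero => rw [des_eq_sum]; simp
  | succ m' =>
    rw [des_eq_sum, Finset.sum_range_succ, dInd_eq_zero w (le_refl _)]
    have h1 : ∑ j ∈ Finset.range m', dInd w j ≤ m' :=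
      le_trans (Finset.sum_le_sum fun j _ => dInd_le_one w j) (by simp)
    have h2 : max (m' + 1) 1 = m' + 1 := by omega
    omega

/-- Insert the largest value at position `i`. -/
def ins {m : ℕ} (w : Equiv.Perm (Fin m)) (i : Fin (m + 1)) : Equiv.Perm (Fin (m + 1)) :=
  (finSuccEquiv' i).trans ((Equiv.optionCongr w).trans finSuccEquivLast.symm)

lemma ins_self {m : ℕ} (w : Equiv.Perm (Fin m)) (i : Fin (m + 1)) : ins w i i = Fin.last m := by
  simp [ins]

lemma ins_succAbove {m : ℕ} (w : Equiv.Perm (Fin m)) (i : Fin (m + 1)) (j : Fin m) :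
    ins w i (i.succAbove j) = (w j).castSucc := by
  simp [ins, finSuccEquiv'_succAbove]

lemma ins_apply_lt {m : ℕ} (w : Equiv.Perm (Fin m)) (i : Fin (m + 1)) (k : ℕ)
    (hk : k < (i : ℕ)) (hkm : k < m) :
    ins w i ⟨k, by omega⟩ = (w ⟨k, hkm⟩).castSucc := by
  have h : Fin.castSucc (⟨k, hkm⟩ : Fin m) < i := by
    rw [Fin.lt_def]; simpa using hk
  have heq : i.succAbove ⟨k, hkm⟩ = ⟨k, by omega⟩ := by
    rw [Fin.succAbove_of_castSucc_lt i _ h]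
    apply Fin.ext; simp
  rw [← heq, ins_succAbove]

lemma ins_apply_succ {m : ℕ} (w : Equiv.Perm (Fin m)) (i : Fin (m + 1)) (k : ℕ)
    (h : (i : ℕ) ≤ k) (hk : k < m) :
    ins w i ⟨k + 1, by omega⟩ = (w ⟨k, hk⟩).castSucc := by
  have h' : i ≤ Fin.castSucc (⟨k, hk⟩ : Fin m) := by
    rw [Fin.le_def]; simpa using h
  have heq : i.succAbove ⟨k, hk⟩ = ⟨k + 1, by omega⟩ := by
    rw [Fin.succAbove_of_le_castSucc i _ h']
    apply Fin.ext; simp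
  rw [← heq, ins_succAbove]

lemma dInd_ins_lt {m : ℕ} (w : Equiv.Perm (Fin m)) (i : Fin (m + 1)) (k : ℕ)
    (h : k + 1 < (i : ℕ)) : dInd (ins w i) k = dInd w k := by
  have him : (i : ℕ) < m + 1 := i.isLt
  have hkm : k + 1 < m := by omega
  rw [dInd, dif_pos (show k + 1 < m + 1 by omega), dInd, dif_pos hkm]
  rw [ins_apply_lt w i (k + 1) (by omega) hkm, ins_apply_lt w i k (by omega) (by omega)]
  simp [Fin.castSucc_lt_castSucc_iff]

lemma dInd_ins_eq_pred {m : ℕ} (w : Equiv.Perm (Fin m)) (i : Fin (m + 1)) (k : ℕ)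
    (h : k + 1 = (i : ℕ)) : dInd (ins w i) k = 0 := by
  have him : (i : ℕ) < m + 1 := i.isLt
  rw [dInd, dif_pos (show k + 1 < m + 1 by omega), if_neg]
  intro hlt
  have h1 : (⟨k + 1, by omega⟩ : Fin (m + 1)) = i := Fin.ext h
  rw [h1, ins_self, ins_apply_lt w i k (by omega) (by omega)] at hlt
  exact absurd hlt (not_lt_of_gt (Fin.castSucc_lt_last _))

lemma dInd_ins_self {m : ℕ} (w : Equiv.Perm (Fin m)) (i : Fin (m + 1)) (k : ℕ)
    (h : k = (i : ℕ)) (hk : k < m) : dInd (ins w i) k = 1 := by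
  rw [dInd, dif_pos (show k + 1 < m + 1 by omega), if_pos]
  have h1 : (⟨k, Nat.lt_of_succ_lt (show k + 1 < m + 1 by omega)⟩ : Fin (m + 1)) = i :=
    Fin.ext h
  rw [ins_apply_succ w i k (by omega) hk, h1, ins_self]
  exact Fin.castSucc_lt_last _

lemma dInd_ins_gt {m : ℕ} (w : Equiv.Perm (Fin m)) (i : Fin (m + 1)) (k : ℕ)
    (h : (i : ℕ) ≤ k) : dInd (ins w i) (k + 1) = dInd w k := by
  by_cases hk : k + 1 < m
  · rw [dInd, dif_pos (show k + 1 + 1 < m + 1 by omega), dInd, dif_pos hk]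
    rw [ins_apply_succ w i (k + 1) (by omega) hk, ins_apply_succ w i k h (by omega)]
    simp [Fin.castSucc_lt_castSucc_iff]
  · rw [dInd_eq_zero _ (by omega), dInd_eq_zero _ (by omega)]

lemma des_ins {m : ℕ} (w : Equiv.Perm (Fin m)) (i : Fin (m + 1)) :
    des (ins w i) +
      (if (i : ℕ) = m ∨ (0 < (i : ℕ) ∧ dInd w ((i : ℕ) - 1) = 1) then 1 else 0)
      = des w + 1 := by
  have him : (i : ℕ) < m + 1 := i.isLt
  rw [des_eq_sum, des_eq_sum]
  by_cases hc : (i : ℕ) = m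
  · rw [if_pos (Or.inl hc), Finset.sum_range_succ, dInd_eq_zero _ (le_refl _)]
    have heq : ∑ k ∈ Finset.range m, dInd (ins w i) k = ∑ k ∈ Finset.range m, dInd w k := by
      apply Finset.sum_congr rfl
      intro k hk
      rw [Finset.mem_range] at hk
      by_cases h2 : k + 1 < m
      · exact dInd_ins_lt w i k (by omega)
      · rw [dInd_ins_eq_pred w i k (by omega), dInd_eq_zero w (by omega)]
    omega
  · have hcm : (i : ℕ) < m := by omega
    set c := (i : ℕ) with hc_def
    have hite : (if c = m ∨ (0 < c ∧ dInd w (c - 1) = 1) then 1 else 0)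
        = (if 0 < c ∧ dInd w (c - 1) = 1 then 1 else 0) := by
      by_cases h : 0 < c ∧ dInd w (c - 1) = 1
      · rw [if_pos (Or.inr h), if_pos h]
      · rw [if_neg, if_neg h]
        rintro (h' | h')
        exacts [hc h', h h']
    have h1 : ∑ k ∈ Finset.range (m + 1), dInd (ins w i) k
        = (∑ k ∈ Finset.range c, dInd (ins w i) k)
          + ∑ k ∈ Finset.Ico c (m + 1), dInd (ins w i) k := by
      rw [Finset.range_eq_Ico, ← Finset.sum_Ico_consecutive _ (Nat.zero_le c) (by omega),
        ← Finset.range_eq_Ico]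
    have h2 : ∑ j ∈ Finset.range m, dInd w j
        = (∑ j ∈ Finset.range c, dInd w j) + ∑ j ∈ Finset.Ico c m, dInd w j := by
      rw [Finset.range_eq_Ico, ← Finset.sum_Ico_consecutive _ (Nat.zero_le c) (by omega),
        ← Finset.range_eq_Ico]
    have h3 : ∑ k ∈ Finset.Ico c (m + 1), dInd (ins w i) k
        = 1 + ∑ j ∈ Finset.Ico c m, dInd w j := by
      rw [Finset.sum_eq_sum_Ico_succ_bot (by omega), dInd_ins_self w i c rfl hcm]
      congr 1
      rw [Finset.sum_Ico_eq_sum_range, Finset.sum_Ico_eq_sum_range]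
      apply Finset.sum_congr (by rw [show m + 1 - (c + 1) = m - c by omega])
      intro k _
      rw [show c + 1 + k = (c + k) + 1 by omega, dInd_ins_gt w i (c + k) (by omega)]
    have h4 : (∑ k ∈ Finset.range c, dInd (ins w i) k)
        + (if 0 < c ∧ dInd w (c - 1) = 1 then 1 else 0)
        = ∑ k ∈ Finset.range c, dInd w k := by
      cases hc0 : c with
      | zero => simp
      | succ c' =>
        rw [Finset.sum_range_succ, Finset.sum_range_succ]
        have e1 : ∑ k ∈ Finset.range c', dInd (ins w i) k
            = ∑ k ∈ Finset.range c', dInd w k := by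
          apply Finset.sum_congr rfl
          intro k hk
          rw [Finset.mem_range] at hk
          exact dInd_ins_lt w i k (by omega)
        have e2 : dInd (ins w i) c' = 0 := dInd_ins_eq_pred w i c' (by omega)
        have e3 : dInd w c' ≤ 1 := dInd_le_one w c'
        rcases Nat.le_one_iff_eq_zero_or_eq_one.mp e3 with h0 | h0 <;>
          simp [e1, e2, h0]
    rw [hite, h1, h2, h3]
    omega

lemma card_P {m : ℕ} (w : Equiv.Perm (Fin m)) :
    (Finset.univ.filter (fun i : Fin (m + 1) =>
      (i : ℕ) = m ∨ (0 < (i : ℕ) ∧ dInd w ((i : ℕ) - 1) = 1))).card = des w + 1 := by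
  rw [Finset.card_filter,
    Fin.sum_univ_eq_sum_range
      (fun c => if c = m ∨ (0 < c ∧ dInd w (c - 1) = 1) then 1 else 0) (m + 1)]
  rw [Finset.sum_range_succ, if_pos (Or.inl rfl)]
  have hstep : ∑ c ∈ Finset.range m, (if c = m ∨ (0 < c ∧ dInd w (c - 1) = 1) then 1 else 0)
      = ∑ c ∈ Finset.range m, (if 0 < c ∧ dInd w (c - 1) = 1 then 1 else 0) := by
    apply Finset.sum_congr rfl
    intro c hcr
    rw [Finset.mem_range] at hcr
    by_cases h : 0 < c ∧ dInd w (c - 1) = 1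
    · rw [if_pos (Or.inr h), if_pos h]
    · rw [if_neg, if_neg h]
      rintro (h' | h')
      exacts [absurd h' (by omega), h h']
  rw [hstep]
  cases m with
  | zero => simp [des_eq_sum]
  | succ m' =>
    rw [Finset.sum_range_succ', des_eq_sum, Finset.sum_range_succ,
      dInd_eq_zero w (le_refl _)]
    simp only [Nat.add_sub_cancel, if_neg (by omega : ¬(0 < 0 ∧ dInd w (0 - 1) = 1))]
    have : ∀ c ∈ Finset.range m', (if 0 < c + 1 ∧ dInd w c = 1 then 1 else 0) = dInd w c := by
      intro c _
      have := dInd_le_one w c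
      by_cases h : dInd w c = 1
      · rw [if_pos ⟨by omega, h⟩, h]
      · rw [if_neg (by omega), show dInd w c = 0 by omega]
    rw [Finset.sum_congr rfl this]

lemma qchoose_zero (x : ℚ) : qchoose x 0 = 1 := by simp [qchoose]

lemma qchoose_succ (x : ℚ) (m : ℕ) :
    qchoose x (m + 1) = qchoose x m * (x - m) / (m + 1) := by
  unfold qchoose
  rw [Finset.prod_range_succ, Nat.factorial_succ]
  have h1 : (Nat.factorial m : ℚ) ≠ 0 := Nat.cast_ne_zero.mpr (Nat.factorial_ne_zero m)
  have h2 : ((m : ℚ) + 1) ≠ 0 := by positivity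
  push_cast
  field_simp
  try ring
  try tauto

lemma qchoose_succ' (x : ℚ) (m : ℕ) :
    qchoose (x + 1) (m + 1) = qchoose x m * (x + 1) / (m + 1) := by
  unfold qchoose
  rw [Finset.prod_range_succ']
  have h0 : ∀ j ∈ Finset.range m, (x + 1 - ((j : ℚ) + 1)) = x - j := by
    intro j _; push_cast; ring
  rw [Finset.prod_congr rfl (fun (j : ℕ) (hj : j ∈ Finset.range m) =>
    (by push_cast; ring : x + 1 - ((j + 1 : ℕ) : ℚ) = x - j))]
  rw [Nat.factorial_succ]
  have h1 : (Nat.factorial m : ℚ) ≠ 0 := Nat.cast_ne_zero.mpr (Nat.factorial_ne_zero m)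
  have h2 : ((m : ℚ) + 1) ≠ 0 := by positivity
  push_cast
  field_simp
  try ring
  try tauto

lemma key (m : ℕ) (y d : ℚ) :
    (d + 1) * qchoose y (m + 1) + ((m : ℚ) - d) * qchoose (y + 1) (m + 1)
      = (y - d) * qchoose y m := by
  rw [qchoose_succ, qchoose_succ']
  have h2 : ((m : ℚ) + 1) ≠ 0 := by positivity
  field_simp
  ring

lemma inner_sum {m : ℕ} (x : ℚ) (w : Equiv.Perm (Fin m)) :
    ∑ i : Fin (m + 1), qchoose (x + des (ins w i)) (m + 1)
      = ((des w : ℚ) + 1) * qchoose (x + des w) (m + 1)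
        + ((m : ℚ) - des w) * qchoose (x + des w + 1) (m + 1) := by
  have step : ∀ i : Fin (m + 1), qchoose (x + des (ins w i)) (m + 1)
      = if ((i : ℕ) = m ∨ (0 < (i : ℕ) ∧ dInd w ((i : ℕ) - 1) = 1))
        then qchoose (x + des w) (m + 1) else qchoose (x + des w + 1) (m + 1) := by
    intro i
    have h := des_ins w i
    by_cases hP : ((i : ℕ) = m ∨ (0 < (i : ℕ) ∧ dInd w ((i : ℕ) - 1) = 1))
    · rw [if_pos hP]
      rw [if_pos hP] at h
      rw [show des (ins w i) = des w by omega]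
    · rw [if_neg hP]
      rw [if_neg hP] at h
      rw [show des (ins w i) = des w + 1 by omega]
      rw [show ((des w + 1 : ℕ) : ℚ) = (des w : ℚ) + 1 by push_cast; ring]
      rw [show x + ((des w : ℚ) + 1) = x + des w + 1 by ring]
  rw [Finset.sum_congr rfl (fun i _ => step i), Finset.sum_ite, Finset.sum_const,
    Finset.sum_const, card_P]
  have hcards : (Finset.univ.filter (fun i : Fin (m + 1) =>
      ¬((i : ℕ) = m ∨ (0 < (i : ℕ) ∧ dInd w ((i : ℕ) - 1) = 1)))).card = m - des w := by
    have htot := Finset.card_filter_add_card_filter_not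
      (s := (Finset.univ : Finset (Fin (m + 1))))
      (p := fun i : Fin (m + 1) => (i : ℕ) = m ∨ (0 < (i : ℕ) ∧ dInd w ((i : ℕ) - 1) = 1))
    rw [card_P] at htot
    have hle := des_le w
    simp only [Finset.card_univ, Fintype.card_fin] at htot
    omega
  rw [hcards, nsmul_eq_mul, nsmul_eq_mul, Nat.cast_sub (des_le w)]
  push_cast
  ring

lemma ins_bijective (m : ℕ) :
    Function.Bijective (fun p : Equiv.Perm (Fin m) × Fin (m + 1) => ins p.1 p.2) := by
  rw [Fintype.bijective_iff_injective_and_card]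
  constructor
  · rintro ⟨w, i⟩ ⟨w', i'⟩ h
    simp only at h
    have hi : i = i' := by
      have h1 : ins w i i = Fin.last m := ins_self w i
      have h2 : ins w i i' = Fin.last m := by rw [h]; exact ins_self w' i'
      exact Equiv.injective (ins w i) (h1.trans h2.symm)
    subst hi
    have hw : w = w' := by
      apply Equiv.ext
      intro j
      have h3 : ins w i (i.succAbove j) = ins w' i (i.succAbove j) := by rw [h]
      rw [ins_succAbove, ins_succAbove] at h3
      exact Fin.castSucc_injective m h3
    rw [hw]
  · simp [Fintype.card_perm, Fintype.card_fin, Nat.factorial_succ, mul_comm]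

lemma sum_perm (m : ℕ) (x : ℚ) :
    ∑ w : Equiv.Perm (Fin m), qchoose (x + des w) m = x ^ m := by
  induction m with
  | zero =>
    have h1 : ∀ w : Equiv.Perm (Fin 0), qchoose (x + des w) 0 = 1 := fun w => qchoose_zero _
    rw [Finset.sum_congr rfl (fun w _ => h1 w), Finset.sum_const]
    simp
  | succ m ih =>
    rw [pow_succ, ← ih, Finset.sum_mul]
    rw [← Fintype.sum_bijective _ (ins_bijective m)
      (fun p : Equiv.Perm (Fin m) × Fin (m + 1) => qchoose (x + des (ins p.1 p.2)) (m + 1))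
      (fun v => qchoose (x + des v) (m + 1)) (fun p => rfl)]
    rw [Fintype.sum_prod_type]
    apply Finset.sum_congr rfl
    intro w _
    rw [inner_sum x w]
    have hkey := key m (x + (des w : ℚ)) (des w : ℚ)
    rw [hkey]
    ring

end Worpitzky

/-- Worpitzky's identity: for every nonnegative integer `m` and every integer `x`,
`x^m = ∑_{a=0}^{m−1} A(m,a) · C(x+a, m)` (with the convention that for `m = 0` the sum
consists of the single term `A(0,0)·C(x,0) = 1`). -/
theorem stmt_13 (m : ℕ) (x : ℤ) :
    ((x : ℚ)) ^ m
      = ∑ a ∈ Finset.range (max m 1), (eulerian m a : ℚ) * qchoose ((x : ℚ) + a) m := by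
  rw [← Worpitzky.sum_perm m (x : ℚ)]
  rw [← Finset.sum_fiberwise_of_maps_to
    (fun w _ => Finset.mem_range.mpr (Worpitzky.des_lt_max w))
    (fun w : Equiv.Perm (Fin m) => qchoose ((x : ℚ) + Worpitzky.des w) m)]
  apply Finset.sum_congr rfl
  intro a _
  have hcong : ∀ w ∈ Finset.univ.filter (fun w : Equiv.Perm (Fin m) => Worpitzky.des w = a),
      qchoose ((x : ℚ) + Worpitzky.des w) m = qchoose ((x : ℚ) + a) m := by
    intro w hw
    rw [(Finset.mem_filter.mp hw).2]
  rw [Finset.sum_congr rfl hcong, Finset.sum_const, nsmul_eq_mul, Worpitzky.eulerian_eq]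
end

section
/- There is a bijection between (i) pairs (σ, x) where σ is a permutation of [n] with exactly k cycles and x assigns to each cycle c a nonnegative integer x(c) < |c|, with total weight ∑_c x(c) = q, and (ii) chain gangs on [n] with k blocks and weight q. -/
/-- A chain gang on `[n]` (modelled on `Fin n`): a partition of `Fin n` into nonempty
blocks, each internally linearly ordered, recorded as duplicate-free lists. -/
structure ChainGang (n : ℕ) where
  blocks : Finset (List (Fin n))
  nodup : ∀ l ∈ blocks, l.Nodup
  nonempty : ∀ l ∈ blocks, l ≠ []
  partition : ∀ x : Fin n, ∃! l, l ∈ blocks ∧ x ∈ l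

/-- The weight of a block: the number of its elements smaller than its first (leader)
element. -/
def blockWeight {n : ℕ} : List (Fin n) → ℕ
  | [] => 0
  | a :: rest => rest.countP (fun x => decide (x < a))

/-- The weight of a chain gang: the sum of the weights of its blocks. -/
def ChainGang.weight {n : ℕ} (G : ChainGang n) : ℕ :=
  ∑ l ∈ G.blocks, blockWeight l

/-- A properly weighted permutation of `[n]` with `k` cycles and total weight `q`:
a permutation `σ` together with an assignment `x` of a nonnegative integer `x(c) < |c|`
to each cycle `c` of `σ`, with `∑_c x(c) = q`.  (The assignment is recorded as a function
on all permutations vanishing off the nontrivial cycles of `σ`; fixed points, being cycles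
of length `1`, are forced to carry weight `0`.)  The number of cycles of `σ`, counting
fixed points, is `σ.cycleType.card + (n − σ.cycleType.sum)`. -/
structure WeightedPerm (n k q : ℕ) where
  σ : Equiv.Perm (Fin n)
  x : Equiv.Perm (Fin n) → ℕ
  cycles : σ.cycleType.card + (n - σ.cycleType.sum) = k
  zero_off : ∀ c, c ∉ σ.cycleFactorsFinset → x c = 0
  proper : ∀ c ∈ σ.cycleFactorsFinset, x c < c.support.card
  total : ∑ c ∈ σ.cycleFactorsFinset, x c = q


open List Finset Equiv Equiv.Perm

namespace Stmt17
variable {n : ℕ}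

lemma countP_lt_sorted {L : List (Fin n)} (h : L.Pairwise (· < ·)) {i : ℕ} (hi : i < L.length) :
    L.countP (fun y => decide (y < L.get ⟨i, hi⟩)) = i := by
  have hget := List.pairwise_iff_get.mp h
  set a := L.get ⟨i, hi⟩ with ha
  conv_lhs => rw [← List.take_append_drop i L]
  rw [List.countP_append]
  have h1 : (L.take i).countP (fun y => decide (y < a)) = i := by
    have : ∀ y ∈ L.take i, (fun y => decide (y < a)) y = true := by
      intro y hy
      obtain ⟨j, hj, rfl⟩ := List.mem_iff_getElem.mp hy
      have hj' : j < i := by simp only [List.length_take] at hj; omega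
      rw [List.getElem_take]
      simp only [decide_eq_true_eq, ha, List.get_eq_getElem]
      exact hget ⟨j, lt_of_lt_of_le hj' (le_of_lt hi)⟩ ⟨i, hi⟩ hj'
    rw [List.countP_eq_length.mpr this, List.length_take]
    exact min_eq_left (le_of_lt hi)
  have h2 : (L.drop i).countP (fun y => decide (y < a)) = 0 := by
    rw [List.countP_eq_zero]
    intro y hy
    obtain ⟨j, hj, rfl⟩ := List.mem_iff_getElem.mp hy
    rw [List.getElem_drop]
    simp only [decide_eq_true_eq, not_lt, ha, List.get_eq_getElem]
    rcases Nat.eq_zero_or_pos j with rfl | hjpos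
    · simp
    · exact le_of_lt (hget ⟨i, hi⟩ ⟨i + j, by rw [List.length_drop] at hj; omega⟩ (Fin.mk_lt_mk.mpr (by omega)))
  omega

/-- rank of a in S -/
def rankIn (S : Finset (Fin n)) (a : Fin n) : ℕ := (S.filter (fun y => y < a)).card

lemma countP_eq_rankIn {l : List (Fin n)} (hl : l.Nodup) (a : Fin n) :
    l.countP (fun y => decide (y < a)) = rankIn l.toFinset a := by
  rw [rankIn, List.countP_eq_length_filter]
  rw [← List.toFinset_card_of_nodup (hl.filter _)]  -- name?
  congr 1
  ext y
  simp [List.mem_filter, Finset.mem_filter]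

lemma rankIn_sort_get {S : Finset (Fin n)} {i : ℕ} (hi : i < S.card) :
    rankIn S ((S.sort (· ≤ ·)).get ⟨i, by simpa using hi⟩) = i := by
  have := countP_lt_sorted (S.sortedLT_sort.pairwise) (i := i) (hi := by simpa using hi)
  rw [countP_eq_rankIn (S.sort_nodup (· ≤ ·)) ] at this
  rwa [S.sort_toFinset (· ≤ ·)] at this

lemma rankIn_lt_card {S : Finset (Fin n)} {a : Fin n} (ha : a ∈ S) : rankIn S a < S.card := by
  apply Finset.card_lt_card
  constructor
  · exact Finset.filter_subset _ _
  · intro hsub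
    have := hsub ha
    simp at this

lemma rankIn_strictMonoOn {S : Finset (Fin n)} {a b : Fin n} (ha : a ∈ S) (hab : a < b) :
    rankIn S a < rankIn S b := by
  apply Finset.card_lt_card
  constructor
  · intro y hy
    rw [Finset.mem_filter] at hy ⊢
    exact ⟨hy.1, lt_trans hy.2 hab⟩
  · intro hsub
    have := hsub (Finset.mem_filter.mpr ⟨ha, hab⟩)
    simp at this

lemma sort_get_rankIn {S : Finset (Fin n)} {a : Fin n} (ha : a ∈ S) :
    (S.sort (· ≤ ·)).get ⟨rankIn S a, by simpa using rankIn_lt_card ha⟩ = a := by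
  set b := (S.sort (· ≤ ·)).get ⟨rankIn S a, by simpa using rankIn_lt_card ha⟩ with hb
  have hbS : b ∈ S := by
    rw [hb, ← Finset.mem_sort (α := Fin n) (· ≤ ·)]
    exact List.get_mem _ _
  have hr : rankIn S b = rankIn S a := rankIn_sort_get (rankIn_lt_card ha)
  rcases lt_trichotomy a b with h | h | h
  · exact absurd hr (by have := rankIn_strictMonoOn ha h; omega)
  · exact h.symm
  · exact absurd hr (by have := rankIn_strictMonoOn hbS h; omega)

end Stmt17

namespace Stmt17
variable {n k q : ℕ}

/-! ### toList auxiliary lemmas -/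

lemma toList_toFinset {σ : Equiv.Perm (Fin n)} {s : Fin n} (hs : s ∈ σ.support) :
    (σ.toList s).toFinset = (σ.cycleOf s).support := by
  ext y
  rw [List.mem_toFinset, Equiv.Perm.mem_toList_iff, Equiv.Perm.mem_support_cycleOf_iff]

lemma blockWeight_eq_countP {l : List (Fin n)} (hne : l ≠ []) :
    blockWeight l = l.countP (fun y => decide (y < l.head hne)) := by
  cases l with
  | nil => simp at hne
  | cons a t =>
    simp only [blockWeight, List.head_cons, List.countP_cons]
    simp
    rfl

/-- the key weight computation: the weight of `toList σ s` is the rank of `s` in the support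
of its cycle. -/
lemma blockWeight_toList {σ : Equiv.Perm (Fin n)} {s : Fin n} (hs : s ∈ σ.support) :
    blockWeight (σ.toList s) = rankIn (σ.cycleOf s).support s := by
  have hne : σ.toList s ≠ [] := by
    simp [Equiv.Perm.toList_eq_nil_iff, hs]
  have hhead : (σ.toList s).head hne = s := by
    have h0 : 0 < (σ.toList s).length := List.length_pos_iff.mpr hne
    have := σ.toList_getElem_zero s hs
    rw [List.head_eq_getElem]
    simpa using this
  rw [blockWeight_eq_countP hne, hhead,
    countP_eq_rankIn (Equiv.Perm.nodup_toList σ s), toList_toFinset hs]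

end Stmt17

namespace Stmt17
variable {n k q : ℕ}
open Equiv Equiv.Perm

/-- the chosen starting point of the cycle of `a`. -/
def startOf (σ : Equiv.Perm (Fin n)) (x : Equiv.Perm (Fin n) → ℕ) (a : Fin n) : Fin n :=
  if h : x (σ.cycleOf a) < (σ.cycleOf a).support.card
  then ((σ.cycleOf a).support.sort (· ≤ ·)).get ⟨x (σ.cycleOf a), by simpa using h⟩
  else a

/-- the block of `a` in the chain gang attached to `(σ, x)`. -/
def blockOf (σ : Equiv.Perm (Fin n)) (x : Equiv.Perm (Fin n) → ℕ) (a : Fin n) : List (Fin n) :=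
  if a ∈ σ.support then σ.toList (startOf σ x a) else [a]

variable {σ : Equiv.Perm (Fin n)} {x : Equiv.Perm (Fin n) → ℕ}
  (hx : ∀ c ∈ σ.cycleFactorsFinset, x c < c.support.card)

section
include hx

lemma startOf_lt {a : Fin n} (ha : a ∈ σ.support) :
    x (σ.cycleOf a) < (σ.cycleOf a).support.card :=
  hx _ (cycleOf_mem_cycleFactorsFinset_iff.mpr ha)

lemma startOf_eq {a : Fin n} (ha : a ∈ σ.support) :
    startOf σ x a
      = ((σ.cycleOf a).support.sort (· ≤ ·)).get ⟨x (σ.cycleOf a), by simpa using startOf_lt hx ha⟩ := by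
  rw [startOf, dif_pos (startOf_lt hx ha)]

lemma startOf_mem_support_cycleOf {a : Fin n} (ha : a ∈ σ.support) :
    startOf σ x a ∈ (σ.cycleOf a).support := by
  rw [startOf_eq hx ha, ← Finset.mem_sort (α := Fin n) (· ≤ ·)]
  exact List.get_mem _ _

lemma sameCycle_startOf {a : Fin n} (ha : a ∈ σ.support) :
    σ.SameCycle a (startOf σ x a) :=
  (mem_support_cycleOf_iff.mp (startOf_mem_support_cycleOf hx ha)).1

lemma startOf_mem_support {a : Fin n} (ha : a ∈ σ.support) :
    startOf σ x a ∈ σ.support :=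
  ((sameCycle_startOf hx ha).mem_support_iff).mp ha

lemma cycleOf_startOf {a : Fin n} (ha : a ∈ σ.support) :
    σ.cycleOf (startOf σ x a) = σ.cycleOf a :=
  ((sameCycle_startOf hx ha).cycleOf_eq).symm

lemma rankIn_startOf {a : Fin n} (ha : a ∈ σ.support) :
    rankIn (σ.cycleOf a).support (startOf σ x a) = x (σ.cycleOf a) := by
  rw [startOf_eq hx ha]
  exact rankIn_sort_get (startOf_lt hx ha)

lemma startOf_mem_eq {a s : Fin n} (ha : a ∈ σ.support) (hs : s ∈ (σ.cycleOf a).support)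
    (hr : rankIn (σ.cycleOf a).support s = x (σ.cycleOf a)) :
    startOf σ x a = s := by
  have h1 := sort_get_rankIn hs
  rw [startOf_eq hx ha, ← h1]
  congr 1
  exact Fin.ext (by simp [hr])

lemma startOf_eq_of_cycleOf_eq {a b : Fin n} (ha : a ∈ σ.support) (hb : b ∈ σ.support)
    (hab : σ.cycleOf a = σ.cycleOf b) :
    startOf σ x b = startOf σ x a := by
  refine (startOf_mem_eq hx hb ?_ ?_).trans rfl
  · rw [← hab]; exact startOf_mem_support_cycleOf hx ha
  · rw [← hab]; exact rankIn_startOf hx ha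

lemma blockOf_eq_of_cycleOf_eq {a b : Fin n} (ha : a ∈ σ.support) (hb : b ∈ σ.support)
    (hab : σ.cycleOf a = σ.cycleOf b) :
    blockOf σ x b = blockOf σ x a := by
  rw [blockOf, blockOf, if_pos ha, if_pos hb, startOf_eq_of_cycleOf_eq hx ha hb hab]

end

end Stmt17

namespace Stmt17
variable {n k q : ℕ}
open Equiv Equiv.Perm

variable {σ : Equiv.Perm (Fin n)} {x : Equiv.Perm (Fin n) → ℕ}
  (hx : ∀ c ∈ σ.cycleFactorsFinset, x c < c.support.card)

lemma blockOf_of_not_mem {a : Fin n} (ha : a ∉ σ.support) : blockOf σ x a = [a] := by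
  rw [blockOf, if_neg ha]

section
include hx

lemma blockOf_of_mem {a : Fin n} (ha : a ∈ σ.support) :
    blockOf σ x a = σ.toList (startOf σ x a) := by
  rw [blockOf, if_pos ha]

lemma formPerm_blockOf {a : Fin n} (ha : a ∈ σ.support) :
    (blockOf σ x a).formPerm = σ.cycleOf a := by
  rw [blockOf_of_mem hx ha, Equiv.Perm.formPerm_toList, cycleOf_startOf hx ha]

lemma mem_blockOf_iff {a b : Fin n} (ha : a ∈ σ.support) :
    b ∈ blockOf σ x a ↔ σ.SameCycle a b := by
  rw [blockOf_of_mem hx ha, Equiv.Perm.mem_toList_iff]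
  constructor
  · exact fun h => (sameCycle_startOf hx ha).trans h.1
  · exact fun h => ⟨(sameCycle_startOf hx ha).symm.trans h, startOf_mem_support hx ha⟩

lemma blockWeight_blockOf {a : Fin n} (ha : a ∈ σ.support) :
    blockWeight (blockOf σ x a) = x (σ.cycleOf a) := by
  rw [blockOf_of_mem hx ha, blockWeight_toList (startOf_mem_support hx ha),
    cycleOf_startOf hx ha, rankIn_startOf hx ha]

lemma length_blockOf {a : Fin n} (ha : a ∈ σ.support) :
    (blockOf σ x a).length = (σ.cycleOf a).support.card := by
  rw [blockOf_of_mem hx ha, Equiv.Perm.length_toList, cycleOf_startOf hx ha]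

lemma two_le_length_blockOf {a : Fin n} (ha : a ∈ σ.support) :
    2 ≤ (blockOf σ x a).length := by
  rw [length_blockOf hx ha]
  exact (isCycle_cycleOf σ (mem_support.mp ha)).two_le_card_support

lemma toFinset_blockOf {a : Fin n} (ha : a ∈ σ.support) :
    (blockOf σ x a).toFinset = (σ.cycleOf a).support := by
  rw [blockOf_of_mem hx ha, toList_toFinset (startOf_mem_support hx ha), cycleOf_startOf hx ha]

lemma mem_blockOf_self (a : Fin n) : a ∈ blockOf σ x a := by
  by_cases ha : a ∈ σ.support
  · exact (mem_blockOf_iff hx ha).mpr (Equiv.Perm.SameCycle.refl σ a)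
  · rw [blockOf_of_not_mem ha]; exact List.mem_singleton_self a

lemma blockOf_eq_of_mem {a b : Fin n} (hb : b ∈ blockOf σ x a) :
    blockOf σ x a = blockOf σ x b := by
  by_cases ha : a ∈ σ.support
  · have hsc : σ.SameCycle a b := (mem_blockOf_iff hx ha).mp hb
    have hbs : b ∈ σ.support := (hsc.mem_support_iff).mp ha
    exact (blockOf_eq_of_cycleOf_eq hx ha hbs hsc.cycleOf_eq).symm
  · rw [blockOf_of_not_mem ha] at hb ⊢
    rw [List.mem_singleton] at hb
    rw [hb]
    exact (blockOf_of_not_mem ha).symm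

lemma nodup_blockOf (a : Fin n) : (blockOf σ x a).Nodup := by
  by_cases ha : a ∈ σ.support
  · rw [blockOf_of_mem hx ha]; exact Equiv.Perm.nodup_toList _ _
  · rw [blockOf_of_not_mem ha]; exact List.nodup_singleton a

lemma blockOf_ne_nil (a : Fin n) : blockOf σ x a ≠ [] := by
  by_cases ha : a ∈ σ.support
  · rw [blockOf_of_mem hx ha]
    simp only [ne_eq, Equiv.Perm.toList_eq_nil_iff, not_not]
    exact startOf_mem_support hx ha
  · rw [blockOf_of_not_mem ha]; simp

end
end Stmt17

namespace Stmt17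
variable {n k q : ℕ}
open Equiv Equiv.Perm

lemma cycleFactorsFinset_eq_image (σ : Equiv.Perm (Fin n)) :
    σ.cycleFactorsFinset = σ.support.image σ.cycleOf := by
  ext c
  simp only [Finset.mem_image]
  constructor
  · intro hc
    have hcyc : c.IsCycle := (mem_cycleFactorsFinset_iff.mp hc).1
    obtain ⟨a, ha⟩ := hcyc.nonempty_support
    have haσ : a ∈ σ.support := mem_cycleFactorsFinset_support_le hc ha
    exact ⟨a, haσ, (cycle_is_cycleOf ha hc).symm⟩
  · rintro ⟨a, ha, rfl⟩
    exact cycleOf_mem_cycleFactorsFinset_iff.mpr ha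

variable {σ : Equiv.Perm (Fin n)} {x : Equiv.Perm (Fin n) → ℕ}
  (hx : ∀ c ∈ σ.cycleFactorsFinset, x c < c.support.card)

/-- the chain gang attached to a weighted permutation. -/
def gangOf (σ : Equiv.Perm (Fin n)) (x : Equiv.Perm (Fin n) → ℕ)
    (hx : ∀ c ∈ σ.cycleFactorsFinset, x c < c.support.card) : ChainGang n where
  blocks := Finset.univ.image (blockOf σ x)
  nodup := by
    intro l hl
    obtain ⟨a, -, rfl⟩ := Finset.mem_image.mp hl
    exact nodup_blockOf hx a
  nonempty := by
    intro l hl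
    obtain ⟨a, -, rfl⟩ := Finset.mem_image.mp hl
    exact blockOf_ne_nil hx a
  partition := by
    intro a
    refine ⟨blockOf σ x a, ⟨Finset.mem_image.mpr ⟨a, Finset.mem_univ a, rfl⟩,
      mem_blockOf_self hx a⟩, ?_⟩
    rintro l ⟨hl, hal⟩
    obtain ⟨b, -, rfl⟩ := Finset.mem_image.mp hl
    exact blockOf_eq_of_mem hx hal

section
include hx

lemma gangOf_blocks_eq :
    (gangOf σ x hx).blocks
      = σ.support.image (blockOf σ x) ∪ (σ.supportᶜ).image (blockOf σ x) := by
  show Finset.univ.image (blockOf σ x) = _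
  rw [← Finset.image_union]
  congr 1
  simp [Finset.union_comm]

lemma image_formPerm_image_blockOf :
    (σ.support.image (blockOf σ x)).image List.formPerm = σ.cycleFactorsFinset := by
  rw [Finset.image_image, cycleFactorsFinset_eq_image σ]
  exact Finset.image_congr fun a ha => formPerm_blockOf hx ha

lemma injOn_formPerm_image_blockOf :
    Set.InjOn List.formPerm ((σ.support.image (blockOf σ x) : Finset (List (Fin n))) : Set (List (Fin n))) := by
  rintro l1 hl1 l2 hl2 h
  obtain ⟨a, ha, rfl⟩ := Finset.mem_image.mp hl1
  obtain ⟨b, hb, rfl⟩ := Finset.mem_image.mp hl2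
  rw [formPerm_blockOf hx ha, formPerm_blockOf hx hb] at h
  exact (blockOf_eq_of_cycleOf_eq hx ha hb h).symm

lemma card_image_blockOf_support :
    (σ.support.image (blockOf σ x)).card = σ.cycleFactorsFinset.card := by
  rw [← image_formPerm_image_blockOf hx]
  exact (Finset.card_image_of_injOn (injOn_formPerm_image_blockOf hx)).symm

lemma blockOf_compl {a : Fin n} (ha : a ∈ σ.supportᶜ) : blockOf σ x a = [a] :=
  blockOf_of_not_mem (Finset.mem_compl.mp ha)

lemma disjoint_images :
    Disjoint (σ.support.image (blockOf σ x)) ((σ.supportᶜ).image (blockOf σ x)) := by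
  rw [Finset.disjoint_left]
  rintro l hl1 hl2
  obtain ⟨a, ha, rfl⟩ := Finset.mem_image.mp hl1
  obtain ⟨b, hb, hba⟩ := Finset.mem_image.mp hl2
  have h2 := two_le_length_blockOf hx ha
  rw [← hba, blockOf_compl hx hb] at h2
  simp at h2

lemma card_image_blockOf_compl :
    ((σ.supportᶜ).image (blockOf σ x)).card = n - σ.support.card := by
  rw [Finset.card_image_of_injOn, Finset.card_compl, Fintype.card_fin]
  intro a ha b hb h
  rw [blockOf_compl hx ha, blockOf_compl hx hb] at h
  simpa using h

lemma gangOf_card : (gangOf σ x hx).blocks.card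
    = σ.cycleFactorsFinset.card + (n - σ.support.card) := by
  rw [gangOf_blocks_eq hx, Finset.card_union_of_disjoint (disjoint_images hx),
    card_image_blockOf_support hx, card_image_blockOf_compl hx]

lemma gangOf_weight : (gangOf σ x hx).weight = ∑ c ∈ σ.cycleFactorsFinset, x c := by
  rw [ChainGang.weight, gangOf_blocks_eq hx,
    Finset.sum_union (disjoint_images hx)]
  have h2 : ∑ l ∈ (σ.supportᶜ).image (blockOf σ x), blockWeight l = 0 := by
    apply Finset.sum_eq_zero
    intro l hl
    obtain ⟨a, ha, rfl⟩ := Finset.mem_image.mp hl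
    rw [blockOf_compl hx ha]
    rfl
  have h1 : ∑ c ∈ σ.cycleFactorsFinset, x c
      = ∑ l ∈ σ.support.image (blockOf σ x), blockWeight l := by
    rw [← image_formPerm_image_blockOf hx,
      Finset.sum_image (fun l1 hl1 l2 hl2 h => injOn_formPerm_image_blockOf hx hl1 hl2 h)]
    apply Finset.sum_congr rfl
    intro l hl
    obtain ⟨a, ha, rfl⟩ := Finset.mem_image.mp hl
    rw [formPerm_blockOf hx ha, blockWeight_blockOf hx ha]
  rw [h2, h1, add_zero]

end
end Stmt17

namespace Stmt17
variable {n k q : ℕ}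
open Equiv Equiv.Perm

variable {G : ChainGang n}

lemma ChainGang.block_eq_of_mem {l l' : List (Fin n)} {a : Fin n} (hl : l ∈ G.blocks)
    (hl' : l' ∈ G.blocks) (ha : a ∈ l) (ha' : a ∈ l') : l = l' := by
  obtain ⟨b, -, hb⟩ := G.partition a
  rw [hb l ⟨hl, ha⟩, hb l' ⟨hl', ha'⟩]

/-- the nontrivial blocks of a chain gang. -/
def ntBlocks (G : ChainGang n) : Finset (List (Fin n)) :=
  G.blocks.filter (fun l => 2 ≤ l.length)

lemma support_formPerm_nt {l : List (Fin n)} (hl : l ∈ ntBlocks G) :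
    l.formPerm.support = l.toFinset := by
  rw [ntBlocks, Finset.mem_filter] at hl
  apply List.support_formPerm_of_nodup l (G.nodup l hl.1)
  rintro y rfl
  simp at hl

lemma isCycle_formPerm_nt {l : List (Fin n)} (hl : l ∈ ntBlocks G) :
    l.formPerm.IsCycle := by
  rw [ntBlocks, Finset.mem_filter] at hl
  exact List.isCycle_formPerm (G.nodup l hl.1) hl.2

lemma formPerm_nt_disjoint {l l' : List (Fin n)} (hl : l ∈ ntBlocks G) (hl' : l' ∈ ntBlocks G)
    (hne : l ≠ l') : l.formPerm.Disjoint l'.formPerm := by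
  rw [Equiv.Perm.disjoint_iff_disjoint_support, support_formPerm_nt hl, support_formPerm_nt hl']
  rw [Finset.disjoint_left]
  intro a ha ha'
  rw [List.mem_toFinset] at ha ha'
  rw [ntBlocks, Finset.mem_filter] at hl hl'
  exact hne (ChainGang.block_eq_of_mem hl.1 hl'.1 ha ha')

lemma injOn_formPerm_nt :
    Set.InjOn List.formPerm ((ntBlocks G : Finset (List (Fin n))) : Set (List (Fin n))) := by
  intro l hl l' hl' h
  by_contra hne
  have hd := formPerm_nt_disjoint (Finset.mem_coe.mp hl) (Finset.mem_coe.mp hl') hne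
  rw [h] at hd
  rw [Equiv.Perm.disjoint_refl_iff] at hd
  exact (isCycle_formPerm_nt (Finset.mem_coe.mp hl')).ne_one hd

lemma pairwise_disjoint_formPerm_nt :
    ((ntBlocks G).image List.formPerm : Set (Equiv.Perm (Fin n))).Pairwise Equiv.Perm.Disjoint := by
  intro f hf g hg hne
  simp only [Finset.coe_image, Set.mem_image, Finset.mem_coe] at hf hg
  obtain ⟨l, hl, rfl⟩ := hf
  obtain ⟨l', hl', rfl⟩ := hg
  exact formPerm_nt_disjoint hl hl' (fun h => hne (by rw [h]))

/-- the permutation attached to a chain gang. -/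
def gangPerm (G : ChainGang n) : Equiv.Perm (Fin n) :=
  ((ntBlocks G).image List.formPerm).noncommProd id
    (pairwise_disjoint_formPerm_nt.mono' fun _ _ => Equiv.Perm.Disjoint.commute)

lemma gangPerm_cycleFactors :
    (gangPerm G).cycleFactorsFinset = (ntBlocks G).image List.formPerm := by
  rw [Equiv.Perm.cycleFactorsFinset_eq_finset]
  refine ⟨?_, pairwise_disjoint_formPerm_nt, rfl⟩
  intro f hf
  obtain ⟨l, hl, rfl⟩ := Finset.mem_image.mp hf
  exact isCycle_formPerm_nt hl

end Stmt17

namespace Stmt17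
variable {n k q : ℕ}
open Equiv Equiv.Perm

variable {G : ChainGang n}

lemma mem_support_gangPerm_of_mem {l : List (Fin n)} (hl : l ∈ ntBlocks G) {a : Fin n}
    (ha : a ∈ l) : a ∈ (gangPerm G).support := by
  have h1 : a ∈ l.formPerm.support := by
    rw [support_formPerm_nt hl, List.mem_toFinset]; exact ha
  have h2 : l.formPerm ∈ (gangPerm G).cycleFactorsFinset := by
    rw [gangPerm_cycleFactors]
    exact Finset.mem_image.mpr ⟨l, hl, rfl⟩
  exact mem_cycleFactorsFinset_support_le h2 h1

lemma mem_support_gangPerm_iff {a : Fin n} :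
    a ∈ (gangPerm G).support ↔ ∃ l ∈ ntBlocks G, a ∈ l := by
  constructor
  · intro ha
    have hc : (gangPerm G).cycleOf a ∈ (gangPerm G).cycleFactorsFinset :=
      cycleOf_mem_cycleFactorsFinset_iff.mpr ha
    rw [gangPerm_cycleFactors] at hc
    obtain ⟨l, hl, hfl⟩ := Finset.mem_image.mp hc
    refine ⟨l, hl, ?_⟩
    have : a ∈ ((gangPerm G).cycleOf a).support :=
      mem_support_cycleOf_iff.mpr ⟨Equiv.Perm.SameCycle.refl _ _, ha⟩
    rw [← hfl, support_formPerm_nt hl, List.mem_toFinset] at this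
    exact this
  · rintro ⟨l, hl, ha⟩
    exact mem_support_gangPerm_of_mem hl ha

lemma cycleOf_gangPerm_eq {l : List (Fin n)} (hl : l ∈ ntBlocks G) {a : Fin n} (ha : a ∈ l) :
    (gangPerm G).cycleOf a = l.formPerm := by
  have h1 : a ∈ l.formPerm.support := by
    rw [support_formPerm_nt hl, List.mem_toFinset]; exact ha
  have h2 : l.formPerm ∈ (gangPerm G).cycleFactorsFinset := by
    rw [gangPerm_cycleFactors]
    exact Finset.mem_image.mpr ⟨l, hl, rfl⟩
  exact (cycle_is_cycleOf h1 h2).symm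

/-- the weight function attached to a chain gang. -/
def gangX (G : ChainGang n) (c : Equiv.Perm (Fin n)) : ℕ :=
  ∑ l ∈ (ntBlocks G).filter (fun l => l.formPerm = c), blockWeight l

lemma filter_formPerm_eq {l₀ : List (Fin n)} (hl₀ : l₀ ∈ ntBlocks G) :
    (ntBlocks G).filter (fun l => l.formPerm = l₀.formPerm) = {l₀} := by
  ext l
  simp only [Finset.mem_filter, Finset.mem_singleton]
  constructor
  · rintro ⟨hl, h⟩
    exact injOn_formPerm_nt (Finset.mem_coe.mpr hl) (Finset.mem_coe.mpr hl₀) h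
  · rintro rfl
    exact ⟨hl₀, rfl⟩

lemma gangX_formPerm {l₀ : List (Fin n)} (hl₀ : l₀ ∈ ntBlocks G) :
    gangX G l₀.formPerm = blockWeight l₀ := by
  rw [gangX, filter_formPerm_eq hl₀, Finset.sum_singleton]

lemma gangX_zero_off {c : Equiv.Perm (Fin n)} (hc : c ∉ (gangPerm G).cycleFactorsFinset) :
    gangX G c = 0 := by
  rw [gangX, Finset.sum_eq_zero]
  intro l hl
  rw [Finset.mem_filter] at hl
  exact absurd (gangPerm_cycleFactors ▸ Finset.mem_image.mpr ⟨l, hl.1, hl.2⟩) hc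

lemma blockWeight_lt_length {l : List (Fin n)} (hne : l ≠ []) : blockWeight l < l.length := by
  cases l with
  | nil => simp at hne
  | cons a t =>
    show t.countP _ < t.length + 1
    exact Nat.lt_succ_of_le (List.countP_le_length)

lemma gangX_proper {c : Equiv.Perm (Fin n)} (hc : c ∈ (gangPerm G).cycleFactorsFinset) :
    gangX G c < c.support.card := by
  rw [gangPerm_cycleFactors] at hc
  obtain ⟨l, hl, rfl⟩ := Finset.mem_image.mp hc
  rw [gangX_formPerm hl, support_formPerm_nt hl,
    List.toFinset_card_of_nodup (G.nodup l (Finset.mem_filter.mp hl).1)]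
  exact blockWeight_lt_length (G.nonempty l (Finset.mem_filter.mp hl).1)

lemma blockWeight_trivial {l : List (Fin n)} (hl : l ∈ G.blocks) (hnt : ¬ 2 ≤ l.length) :
    blockWeight l = 0 := by
  have h1 : l.length = 1 := by
    have := List.length_pos_iff.mpr (G.nonempty l hl)
    omega
  obtain ⟨a, rfl⟩ := List.length_eq_one_iff.mp h1
  rfl

lemma gangX_total : ∑ c ∈ (gangPerm G).cycleFactorsFinset, gangX G c = G.weight := by
  rw [gangPerm_cycleFactors,
    Finset.sum_image (fun l1 hl1 l2 hl2 h =>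
      injOn_formPerm_nt (Finset.mem_coe.mpr hl1) (Finset.mem_coe.mpr hl2) h)]
  rw [Finset.sum_congr rfl (fun l hl => gangX_formPerm hl)]
  rw [ChainGang.weight, ← Finset.sum_filter_add_sum_filter_not G.blocks (fun l => 2 ≤ l.length)]
  rw [Finset.sum_congr rfl
    (fun l hl => blockWeight_trivial (Finset.mem_filter.mp hl).1 (Finset.mem_filter.mp hl).2)]
  simp [ntBlocks]

lemma trivBlocks_eq :
    G.blocks.filter (fun l => ¬ 2 ≤ l.length)
      = ((gangPerm G).supportᶜ).image (fun a => [a]) := by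
  ext l
  simp only [Finset.mem_filter, Finset.mem_image, Finset.mem_compl]
  constructor
  · rintro ⟨hl, hnt⟩
    have h1 : l.length = 1 := by
      have := List.length_pos_iff.mpr (G.nonempty l hl)
      omega
    obtain ⟨a, rfl⟩ := List.length_eq_one_iff.mp h1
    refine ⟨a, ?_, rfl⟩
    intro ha
    obtain ⟨l', hl', ha'⟩ := mem_support_gangPerm_iff.mp ha
    have := ChainGang.block_eq_of_mem hl (Finset.mem_filter.mp hl').1
      (List.mem_singleton_self a) ha'
    rw [ntBlocks, Finset.mem_filter] at hl'
    rw [← this] at hl'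
    simp at hl'
  · rintro ⟨a, ha, rfl⟩
    obtain ⟨l', ⟨hl', hal'⟩, -⟩ := G.partition a
    have hnt : ¬ 2 ≤ l'.length := by
      intro h2
      exact ha (mem_support_gangPerm_of_mem (Finset.mem_filter.mpr ⟨hl', h2⟩) hal')
    have h1 : l'.length = 1 := by
      have := List.length_pos_iff.mpr (G.nonempty l' hl')
      omega
    obtain ⟨b, rfl⟩ := List.length_eq_one_iff.mp h1
    rw [List.mem_singleton] at hal'
    subst hal'
    exact ⟨hl', by simp⟩

lemma gangPerm_cycles :
    (gangPerm G).cycleType.card + (n - (gangPerm G).cycleType.sum) = G.blocks.card := by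
  have h1 : (gangPerm G).cycleType.card = (ntBlocks G).card := by
    rw [Equiv.Perm.cycleType_def, Multiset.card_map, ← Finset.card_def,  -- card of val
      gangPerm_cycleFactors]
    exact Finset.card_image_of_injOn injOn_formPerm_nt
  have h2 : (gangPerm G).cycleType.sum = (gangPerm G).support.card := sum_cycleType _
  have h3 : n - (gangPerm G).support.card = (G.blocks.filter (fun l => ¬ 2 ≤ l.length)).card := by
    rw [trivBlocks_eq, Finset.card_image_of_injOn (fun a _ b _ h => by simpa using h),
      Finset.card_compl, Fintype.card_fin]
  rw [h1, h2, h3, ntBlocks]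
  exact Finset.card_filter_add_card_filter_not (fun (l : List (Fin n)) => 2 ≤ l.length)

/-- the weighted permutation attached to a chain gang. -/
def toWeighted (G : ChainGang n) (hk : G.blocks.card = k) (hq : G.weight = q) :
    WeightedPerm n k q where
  σ := gangPerm G
  x := gangX G
  cycles := by rw [gangPerm_cycles, hk]
  zero_off := fun c hc => gangX_zero_off hc
  proper := fun c hc => gangX_proper hc
  total := by rw [gangX_total, hq]

end Stmt17

namespace Stmt17
variable {n k q : ℕ}
open Equiv Equiv.Perm

lemma toList_cycleOf {σ : Equiv.Perm (Fin n)} {y : Fin n} (hy : y ∈ σ.support) :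
    (σ.cycleOf y).toList y = σ.toList y := by
  have hne : σ.cycleOf y y ≠ y := by
    rw [cycleOf_apply_self]
    exact mem_support.mp hy
  have h1 : (σ.cycleOf y).cycleOf y = σ.cycleOf y :=
    (isCycle_cycleOf σ (mem_support.mp hy)).cycleOf_eq hne
  rw [Equiv.Perm.toList, Equiv.Perm.toList, h1]
  apply List.ext_getElem (by simp)
  intro i _ _
  simp only [List.getElem_iterate, Equiv.Perm.iterate_eq_pow]
  exact cycleOf_pow_apply_self σ y i

variable {G : ChainGang n}

/-- Key reconstruction: applying `blockOf` to the weighted perm of a gang gives back blocks. -/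
lemma blockOf_gangPerm {l : List (Fin n)} (hl : l ∈ ntBlocks G) {a : Fin n} (ha : a ∈ l) :
    blockOf (gangPerm G) (gangX G) a = l := by
  have hxG : ∀ c ∈ (gangPerm G).cycleFactorsFinset, gangX G c < c.support.card :=
    fun c hc => gangX_proper hc
  have hl2 := hl
  rw [ntBlocks, Finset.mem_filter] at hl2
  obtain ⟨hlB, h2⟩ := hl2
  have hnd : l.Nodup := G.nodup l hlB
  have hne : l ≠ [] := G.nonempty l hlB
  have haσ : a ∈ (gangPerm G).support := mem_support_gangPerm_of_mem hl ha
  have hcyc : (gangPerm G).cycleOf a = l.formPerm := cycleOf_gangPerm_eq hl ha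
  have hsupp : ((gangPerm G).cycleOf a).support = l.toFinset := by
    rw [hcyc, support_formPerm_nt hl]
  have hheadmem : l.head hne ∈ l := List.head_mem hne
  have hrank : rankIn l.toFinset (l.head hne) = gangX G ((gangPerm G).cycleOf a) := by
    rw [hcyc, gangX_formPerm hl, blockWeight_eq_countP hne, countP_eq_rankIn hnd]
  have hstart : startOf (gangPerm G) (gangX G) a = l.head hne := by
    apply startOf_mem_eq hxG haσ
    · rw [hsupp, List.mem_toFinset]
      exact hheadmem
    · rw [hsupp]
      exact hrank
  rw [blockOf_of_mem hxG haσ, hstart]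
  -- now: (gangPerm G).toList (l.head hne) = l
  have hheadσ : l.head hne ∈ (gangPerm G).support := mem_support_gangPerm_of_mem hl hheadmem
  have hcyc' : (gangPerm G).cycleOf (l.head hne) = l.formPerm :=
    cycleOf_gangPerm_eq hl hheadmem
  rw [← toList_cycleOf hheadσ, hcyc']
  have := Equiv.Perm.toList_formPerm_nontrivial l h2 hnd
  rwa [show l.get ⟨0, zero_lt_two.trans_le h2⟩ = l.head hne by
    rw [List.head_eq_getElem]; simp] at this

lemma singleton_mem_blocks {a : Fin n} (ha : a ∉ (gangPerm G).support) : [a] ∈ G.blocks := by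
  have : [a] ∈ G.blocks.filter (fun l => ¬ 2 ≤ l.length) := by
    rw [trivBlocks_eq]
    exact Finset.mem_image.mpr ⟨a, Finset.mem_compl.mpr ha, rfl⟩
  exact (Finset.mem_filter.mp this).1

/-- Round trip B : blocks are recovered. -/
lemma gangOf_toWeighted_blocks :
    (gangOf (gangPerm G) (gangX G) (fun c hc => gangX_proper hc)).blocks = G.blocks := by
  have hxG : ∀ c ∈ (gangPerm G).cycleFactorsFinset, gangX G c < c.support.card :=
    fun c hc => gangX_proper hc
  ext l
  show l ∈ Finset.univ.image (blockOf (gangPerm G) (gangX G)) ↔ _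
  rw [Finset.mem_image]
  constructor
  · rintro ⟨a, -, rfl⟩
    by_cases ha : a ∈ (gangPerm G).support
    · obtain ⟨l', hl', ha'⟩ := mem_support_gangPerm_iff.mp ha
      rw [blockOf_gangPerm hl' ha']
      exact (Finset.mem_filter.mp hl').1
    · rw [blockOf_of_not_mem ha]
      exact singleton_mem_blocks ha
  · intro hl
    by_cases h2 : 2 ≤ l.length
    · have hnt : l ∈ ntBlocks G := Finset.mem_filter.mpr ⟨hl, h2⟩
      have hne : l ≠ [] := G.nonempty l hl
      exact ⟨l.head hne, Finset.mem_univ _, blockOf_gangPerm hnt (List.head_mem hne)⟩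
    · have : l ∈ G.blocks.filter (fun l => ¬ 2 ≤ l.length) := Finset.mem_filter.mpr ⟨hl, h2⟩
      rw [trivBlocks_eq] at this
      obtain ⟨a, ha, rfl⟩ := Finset.mem_image.mp this
      exact ⟨a, Finset.mem_univ _, blockOf_of_not_mem (Finset.mem_compl.mp ha)⟩

end Stmt17

namespace Stmt17
variable {n k q : ℕ}
open Equiv Equiv.Perm

lemma cycleType_card_eq (σ : Equiv.Perm (Fin n)) :
    σ.cycleType.card = σ.cycleFactorsFinset.card := by
  rw [Equiv.Perm.cycleType_def, Multiset.card_map, ← Finset.card_def]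

variable {σ : Equiv.Perm (Fin n)} {x : Equiv.Perm (Fin n) → ℕ}
  (hx : ∀ c ∈ σ.cycleFactorsFinset, x c < c.support.card)

section
include hx

lemma ntBlocks_gangOf : ntBlocks (gangOf σ x hx) = σ.support.image (blockOf σ x) := by
  rw [ntBlocks, gangOf_blocks_eq hx, Finset.filter_union]
  have h1 : (σ.support.image (blockOf σ x)).filter (fun l => 2 ≤ l.length)
      = σ.support.image (blockOf σ x) := by
    apply Finset.filter_true_of_mem
    intro l hl
    obtain ⟨a, ha, rfl⟩ := Finset.mem_image.mp hl
    exact two_le_length_blockOf hx ha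
  have h2 : ((σ.supportᶜ).image (blockOf σ x)).filter (fun l => 2 ≤ l.length) = ∅ := by
    rw [Finset.filter_eq_empty_iff]
    intro l hl
    obtain ⟨a, ha, rfl⟩ := Finset.mem_image.mp hl
    rw [blockOf_compl hx ha]
    simp
  rw [h1, h2, Finset.union_empty]

lemma gangPerm_gangOf : gangPerm (gangOf σ x hx) = σ := by
  rw [gangPerm]
  have h1 : (ntBlocks (gangOf σ x hx)).image List.formPerm = σ.cycleFactorsFinset := by
    rw [ntBlocks_gangOf hx, image_formPerm_image_blockOf hx]
  rw [Finset.noncommProd_congr h1 (fun _ _ => rfl)]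
  exact Equiv.Perm.cycleFactorsFinset_noncommProd σ _

lemma gangX_gangOf (hzero : ∀ c, c ∉ σ.cycleFactorsFinset → x c = 0) :
    gangX (gangOf σ x hx) = x := by
  funext c
  by_cases hc : c ∈ σ.cycleFactorsFinset
  · rw [cycleFactorsFinset_eq_image] at hc
    obtain ⟨a, ha, rfl⟩ := Finset.mem_image.mp hc
    rw [← formPerm_blockOf hx ha, gangX_formPerm ?_, blockWeight_blockOf hx ha,
      formPerm_blockOf hx ha]
    rw [ntBlocks_gangOf hx]
    exact Finset.mem_image.mpr ⟨a, ha, rfl⟩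
  · rw [gangX_zero_off ?_, hzero c hc]
    rw [gangPerm_gangOf hx]
    exact hc

end

lemma WeightedPerm.ext' {a b : WeightedPerm n k q} (h1 : a.σ = b.σ) (h2 : a.x = b.x) :
    a = b := by
  cases a; cases b
  simp only at h1 h2
  subst h1; subst h2
  rfl

lemma ChainGang.ext' {a b : ChainGang n} (h : a.blocks = b.blocks) : a = b := by
  cases a; cases b
  simp only at h
  subst h
  rfl

end Stmt17


open Stmt17 in
/-- There is a bijection between properly weighted permutations of `[n]` with `k` cycles and
total weight `q`, and chain gangs on `[n]` with `k` blocks and weight `q`. -/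
theorem stmt_17 (n k q : ℕ) :
    Nonempty (WeightedPerm n k q ≃
      {G : ChainGang n // G.blocks.card = k ∧ G.weight = q}) := by
  refine ⟨{
    toFun := fun W => ⟨gangOf W.σ W.x W.proper, ?_, ?_⟩
    invFun := fun g => toWeighted g.1 g.2.1 g.2.2
    left_inv := ?_
    right_inv := ?_ }⟩
  · rw [gangOf_card W.proper]
    have h1 := cycleType_card_eq W.σ
    have h2 := Equiv.Perm.sum_cycleType W.σ
    have h3 := W.cycles
    omega
  · rw [gangOf_weight W.proper, W.total]
  · intro W
    apply WeightedPerm.ext'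
    · exact gangPerm_gangOf W.proper
    · exact gangX_gangOf W.proper W.zero_off
  · rintro ⟨G, hk, hq⟩
    apply Subtype.ext
    apply ChainGang.ext'
    exact gangOf_toWeighted_blocks
end

section
/- For positive integers r ≤ s < n and nonnegative integer u, and any i with 0 ≤ i ≤ s−r, the following polynomial identity in t holds: ∑_{ℓ=0}^{s−1} C(t(s−r−i)+s−1−i, s−1−ℓ) · C(u, ℓ) / (n−s+ℓ) = (1/(n−1)!) ∑_{ℓ=0}^{s−1} (n−2−ℓ)! · ℓ! · C(t(s−r−i)+u+s−1−ℓ−i, s−1−ℓ) · C(t(s−r−i)+s−1−i, ℓ). -/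
open Finset Polynomial

lemma qchoose_zero' (x : ℚ) : qchoose x 0 = 1 := by simp [qchoose]

lemma qchoose_pascal (x : ℚ) (k : ℕ) :
    qchoose (x + 1) (k + 1) = qchoose x (k + 1) + qchoose x k := by
  have hk : (Nat.factorial k : ℚ) ≠ 0 := by exact_mod_cast k.factorial_ne_zero
  have hk1 : (Nat.factorial (k+1) : ℚ) ≠ 0 := by exact_mod_cast (k+1).factorial_ne_zero
  have hL : (∏ j ∈ range (k+1), (x + 1 - j)) = (∏ j ∈ range k, (x - j)) * (x+1) := by
    rw [prod_range_succ']
    congr 1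
    · exact prod_congr rfl fun j _ => by push_cast; ring
    · simp
  have hfs : ((Nat.factorial (k+1) : ℚ)) = (k+1) * k.factorial := by
    rw [Nat.factorial_succ]; push_cast; ring
  unfold qchoose
  rw [hL, prod_range_succ, hfs]
  have hk2 : ((k:ℚ)+1) ≠ 0 := by positivity
  field_simp
  ring

lemma qchoose_mul (x : ℚ) (l k : ℕ) :
    qchoose x l * qchoose (x - l) k = qchoose x (l + k) * ((l+k).choose l : ℚ) := by
  have hl : (Nat.factorial l : ℚ) ≠ 0 := by exact_mod_cast l.factorial_ne_zero
  have hkf : (Nat.factorial k : ℚ) ≠ 0 := by exact_mod_cast k.factorial_ne_zero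
  have hlk : (Nat.factorial (l+k) : ℚ) ≠ 0 := by exact_mod_cast (l+k).factorial_ne_zero
  have hprod : (∏ j ∈ range (l+k), (x - j)) =
      (∏ j ∈ range l, (x - j)) * ∏ j ∈ range k, (x - l - j) := by
    rw [prod_range_add]
    congr 1
    exact prod_congr rfl fun j _ => by push_cast; ring
  have hfac : ((l+k).choose l : ℚ) * l.factorial * k.factorial = (l+k).factorial := by
    have := Nat.choose_mul_factorial_mul_factorial (Nat.le_add_right l k)
    simp only [Nat.add_sub_cancel_left] at this
    exact_mod_cast congrArg (Nat.cast (R := ℚ)) this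
  unfold qchoose
  rw [hprod]
  field_simp
  linear_combination (-((∏ j ∈ range l, (x - j)) * (∏ j ∈ range k, (x - l - j)))) * hfac

lemma key (u : ℕ) : ∀ (d : ℕ) (x : ℚ),
    (∑ ℓ ∈ range (d+1), C (qchoose x (d-ℓ) * (u.choose ℓ : ℚ)) * X^ℓ : ℚ[X])
    = ∑ ℓ ∈ range (d+1),
        C (qchoose (x + u - ℓ) (d-ℓ) * qchoose x ℓ) * (1-X)^ℓ * X^(d-ℓ) := by
  induction u with
  | zero =>
    intro d x
    have hLHS : (∑ ℓ ∈ range (d+1), C (qchoose x (d-ℓ) * ((0:ℕ).choose ℓ : ℚ)) * X^ℓ : ℚ[X])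
        = C (qchoose x d) := by
      rw [Finset.sum_eq_single 0]
      · simp
      · intro ℓ _ hℓ
        have : (0:ℕ).choose ℓ = 0 := Nat.choose_eq_zero_of_lt (Nat.pos_of_ne_zero hℓ)
        simp [this]
      · intro h; exact absurd (mem_range.mpr (Nat.succ_pos d)) h
    rw [hLHS]
    have hterm : ∀ ℓ ∈ range (d+1),
        C (qchoose (x + (0:ℕ) - ℓ) (d-ℓ) * qchoose x ℓ) * (1-X)^ℓ * X^(d-ℓ)
        = C (qchoose x d) * ((1-X)^ℓ * X^(d-ℓ) * ((d.choose ℓ : ℚ[X]))) := by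
      intro ℓ hℓ
      have hle : ℓ ≤ d := Nat.lt_succ_iff.mp (mem_range.mp hℓ)
      have harg : x + ((0:ℕ):ℚ) - ℓ = x - ℓ := by push_cast; ring
      have h1 : qchoose x ℓ * qchoose (x - ℓ) (d-ℓ) = qchoose x d * (d.choose ℓ : ℚ) := by
        have := qchoose_mul x ℓ (d - ℓ)
        rwa [Nat.add_sub_cancel' hle] at this
      rw [harg, mul_comm (qchoose (x - (ℓ:ℚ)) (d-ℓ)), h1]
      simp only [map_mul, Polynomial.C_eq_natCast]
      ring
    rw [Finset.sum_congr rfl hterm, ← Finset.mul_sum]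
    have hb : (∑ ℓ ∈ range (d+1), (1-X)^ℓ * X^(d-ℓ) * ((d.choose ℓ : ℚ[X])) : ℚ[X]) = 1 := by
      have := add_pow (1 - X : ℚ[X]) X d
      simp only [sub_add_cancel, one_pow] at this
      rw [← this]
    rw [hb, mul_one]
  | succ u ih =>
    intro d x
    match d with
    | 0 => simp [qchoose_zero']
    | (e+1) =>
      have hL : (∑ ℓ ∈ range (e+2), C (qchoose x (e+1-ℓ) * ((u+1).choose ℓ : ℚ)) * X^ℓ : ℚ[X])
          = (∑ ℓ ∈ range (e+2), C (qchoose x (e+1-ℓ) * (u.choose ℓ : ℚ)) * X^ℓ)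
            + X * (∑ ℓ ∈ range (e+1), C (qchoose x (e-ℓ) * (u.choose ℓ : ℚ)) * X^ℓ) := by
        rw [sum_range_succ' (fun ℓ => C (qchoose x (e+1-ℓ) * ((u+1).choose ℓ : ℚ)) * X^ℓ) (e+1),
            sum_range_succ' (fun ℓ => C (qchoose x (e+1-ℓ) * (u.choose ℓ : ℚ)) * X^ℓ) (e+1),
            Finset.mul_sum]
        simp only [Nat.succ_sub_succ, Nat.choose_zero_right]
        rw [add_right_comm, ← Finset.sum_add_distrib]
        congr 1
        apply Finset.sum_congr rfl
        intro j _
        have hc : ((u+1).choose (j+1) : ℚ) = (u.choose (j+1) : ℚ) + (u.choose j : ℚ) := by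
          rw [Nat.choose_succ_succ']; push_cast; ring
        rw [hc]
        simp only [mul_add, map_add]
        ring
      have hR : (∑ ℓ ∈ range (e+2),
            C (qchoose (x + (u+1:ℕ) - ℓ) (e+1-ℓ) * qchoose x ℓ) * (1-X)^ℓ * X^(e+1-ℓ) : ℚ[X])
          = (∑ ℓ ∈ range (e+2),
              C (qchoose (x + u - ℓ) (e+1-ℓ) * qchoose x ℓ) * (1-X)^ℓ * X^(e+1-ℓ))
            + X * (∑ ℓ ∈ range (e+1),
              C (qchoose (x + u - ℓ) (e-ℓ) * qchoose x ℓ) * (1-X)^ℓ * X^(e-ℓ)) := by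
        rw [sum_range_succ (fun ℓ =>
              C (qchoose (x + (u+1:ℕ) - ℓ) (e+1-ℓ) * qchoose x ℓ) * (1-X)^ℓ * X^(e+1-ℓ)),
            sum_range_succ (fun ℓ =>
              C (qchoose (x + (u:ℕ) - ℓ) (e+1-ℓ) * qchoose x ℓ) * (1-X)^ℓ * X^(e+1-ℓ)),
            Finset.mul_sum]
        simp only [Nat.sub_self, qchoose_zero', one_mul]
        rw [add_right_comm, ← Finset.sum_add_distrib]
        congr 1
        apply Finset.sum_congr rfl
        intro ℓ hℓ
        have hle : ℓ ≤ e := Nat.lt_succ_iff.mp (mem_range.mp hℓ)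
        have h1 : e + 1 - ℓ = (e - ℓ) + 1 := by omega
        have harg : x + ((u+1:ℕ):ℚ) - ℓ = (x + u - ℓ) + 1 := by push_cast; ring
        rw [h1, harg, qchoose_pascal (x + u - ℓ) (e - ℓ)]
        simp only [add_mul, map_add, mul_add]
        ring
      rw [hL, hR, ih (e+1) x, ih e x]

noncomputable def Lfun (m : ℕ) (p : ℚ[X]) : ℚ := p.sum fun k c => c / ((m:ℚ)+k)

lemma Lfun_zero (m : ℕ) : Lfun m 0 = 0 := Polynomial.sum_zero_index _

lemma Lfun_add (m : ℕ) (p q : ℚ[X]) : Lfun m (p+q) = Lfun m p + Lfun m q :=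
  Polynomial.sum_add_index p q _ (fun _ => zero_div _) (fun _ b c => add_div b c _)

lemma Lfun_sum {ι : Type*} (m : ℕ) (t : Finset ι) (g : ι → ℚ[X]) :
    Lfun m (∑ i ∈ t, g i) = ∑ i ∈ t, Lfun m (g i) := by
  classical
  induction t using Finset.induction_on with
  | empty => simp [Lfun_zero]
  | insert _ _ h ih => simp [Finset.sum_insert h, Lfun_add, ih]

lemma Lfun_CX (m : ℕ) (a : ℚ) (k : ℕ) : Lfun m (C a * X^k) = a/((m:ℚ)+k) := by
  rw [C_mul_X_pow_eq_monomial, Lfun, Polynomial.sum_monomial_index]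
  exact zero_div _

lemma alt (l : ℕ) : ∀ c : ℕ, 1 ≤ c →
    ∑ j ∈ range (l+1), ((-1)^j * (l.choose j : ℚ)) / ((c:ℚ)+j)
    = (l.factorial : ℚ) * ((c-1).factorial : ℚ) / ((c+l).factorial : ℚ) := by
  induction l with
  | zero =>
    intro c hc
    obtain ⟨c', rfl⟩ : ∃ c', c = c' + 1 := ⟨c - 1, by omega⟩
    have h1 : ((c'+1).factorial : ℚ) = (c'+1) * (c'.factorial : ℚ) := by
      rw [Nat.factorial_succ]; push_cast; ring
    simp only [range_one, sum_singleton, pow_zero, Nat.choose_self, Nat.cast_one,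
      Nat.cast_zero, add_zero, Nat.add_sub_cancel, one_mul, Nat.add_zero, Nat.factorial_one, zero_add]
    rw [Nat.add_zero, h1]
    have : ((c':ℚ)+1) ≠ 0 := by positivity
    have hf : (c'.factorial : ℚ) ≠ 0 := by exact_mod_cast c'.factorial_ne_zero
    field_simp
    simp
  | succ l ih =>
    intro c hc
    have hA : ∑ j ∈ range (l+2), ((-1)^j * ((l+1).choose j : ℚ)) / ((c:ℚ)+j)
        = ∑ j ∈ range (l+2), ((-1)^j * (l.choose j : ℚ)) / ((c:ℚ)+j)
          + ∑ j ∈ range (l+2),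
              ((-1)^j * (((l+1).choose j : ℚ) - (l.choose j : ℚ))) / ((c:ℚ)+j) := by
      rw [← Finset.sum_add_distrib]
      apply Finset.sum_congr rfl
      intro j _
      rw [← add_div]
      ring_nf
    have hB : ∑ j ∈ range (l+2), ((-1)^j * (l.choose j : ℚ)) / ((c:ℚ)+j)
        = ∑ j ∈ range (l+1), ((-1)^j * (l.choose j : ℚ)) / ((c:ℚ)+j) := by
      rw [sum_range_succ]
      simp [Nat.choose_eq_zero_of_lt (Nat.lt_succ_self l)]
    have hC : ∑ j ∈ range (l+2), ((-1)^j * (((l+1).choose j : ℚ) - (l.choose j : ℚ))) / ((c:ℚ)+j)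
        = - ∑ j ∈ range (l+1), ((-1)^j * (l.choose j : ℚ)) / (((c+1:ℕ):ℚ)+j) := by
      rw [sum_range_succ'
        (fun j => ((-1)^j * (((l+1).choose j : ℚ) - (l.choose j : ℚ))) / ((c:ℚ)+j)) (l+1)]
      simp only [Nat.choose_zero_right, Nat.cast_one, sub_self, pow_zero, one_mul, zero_div,
        add_zero, Nat.cast_zero, zero_add]
      rw [← Finset.sum_neg_distrib]
      apply Finset.sum_congr rfl
      intro j _
      have : ((l+1).choose (j+1) : ℚ) - (l.choose (j+1) : ℚ) = (l.choose j : ℚ) := by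
        rw [Nat.choose_succ_succ']; push_cast; ring
      rw [this]
      push_cast
      rw [show ((c:ℚ) + (↑j + 1)) = ((c:ℚ)+1) + j by ring]
      ring
    rw [hA, hB, hC, ih c hc, ih (c+1) (by omega)]
    have h1 : (c+1) - 1 = c := by omega
    rw [h1]
    obtain ⟨c', rfl⟩ : ∃ c', c = c' + 1 := ⟨c - 1, by omega⟩
    have e1 : ((c'+1+(l+1)).factorial : ℚ) = (c'+1+l+1) * ((c'+1+l).factorial : ℚ) := by
      rw [show c'+1+(l+1) = (c'+1+l)+1 by omega, Nat.factorial_succ]; push_cast; ring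
    have e2 : ((c'+1).factorial : ℚ) = (c'+1) * (c'.factorial : ℚ) := by
      rw [Nat.factorial_succ]; push_cast; ring
    have e3 : ((l+1).factorial : ℚ) = (l+1) * (l.factorial : ℚ) := by
      rw [Nat.factorial_succ]; push_cast; ring
    have e4 : (c'+1+1+l) = (c'+1+l)+1 := by omega
    have e5 : ((c'+1+1+l).factorial : ℚ) = (c'+1+l+1) * ((c'+1+l).factorial : ℚ) := by
      rw [e4, Nat.factorial_succ]; push_cast; ring
    simp only [Nat.add_sub_cancel]
    rw [e1, e2, e3, e5]
    have hf1 : ((c'+1+l).factorial : ℚ) ≠ 0 := by exact_mod_cast (c'+1+l).factorial_ne_zero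
    have hf2 : (c'.factorial : ℚ) ≠ 0 := by exact_mod_cast c'.factorial_ne_zero
    have hp1 : ((c':ℚ)+1+l+1) ≠ 0 := by positivity
    have hp2 : ((c':ℚ)+1) ≠ 0 := by positivity
    push_cast
    field_simp
    ring

lemma sub_pow_expand (l : ℕ) :
    ((1:ℚ[X]) - X)^l = ∑ j ∈ range (l+1), C ((-1)^j * (l.choose j : ℚ)) * X^j := by
  rw [show (1 - X : ℚ[X]) = (-X) + 1 by ring, add_pow]
  apply Finset.sum_congr rfl
  intro j _
  rw [neg_pow]
  simp only [one_pow, map_mul, map_pow, map_neg, map_one, map_natCast]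
  ring

lemma Lfun_term (m : ℕ) (hm : 1 ≤ m) (b : ℚ) (l e : ℕ) :
    Lfun m (C b * (1-X)^l * X^e)
    = b * ((l.factorial : ℚ) * ((m+e-1).factorial : ℚ) / ((m+e+l).factorial : ℚ)) := by
  rw [sub_pow_expand]
  have h1 : (C b * (∑ j ∈ range (l+1), C ((-1)^j * (l.choose j : ℚ)) * X^j) * X^e : ℚ[X])
      = ∑ j ∈ range (l+1), C (b * ((-1)^j * (l.choose j : ℚ))) * X^(e+j) := by
    rw [Finset.mul_sum, Finset.sum_mul]
    apply Finset.sum_congr rfl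
    intro j _
    rw [pow_add]
    simp only [map_mul, map_pow, map_neg, map_one]
    ring
  rw [h1, Lfun_sum]
  have h2 : ∀ j ∈ range (l+1), Lfun m (C (b * ((-1)^j * (l.choose j : ℚ))) * X^(e+j))
      = b * (((-1)^j * (l.choose j : ℚ)) / (((m+e:ℕ):ℚ)+j)) := by
    intro j _
    rw [Lfun_CX]
    push_cast
    rw [show ((m:ℚ) + ((e:ℚ)+(j:ℚ))) = ((m:ℚ)+(e:ℚ))+(j:ℚ) by ring]
    ring
  rw [Finset.sum_congr rfl h2, ← Finset.mul_sum, alt l (m+e) (by omega)]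

lemma main_identity (x : ℚ) (u d m : ℕ) (hm : 1 ≤ m) :
    ∑ ℓ ∈ range (d+1), qchoose x (d-ℓ) * (u.choose ℓ : ℚ) / ((m:ℚ)+ℓ)
    = (1/((m+d).factorial : ℚ)) * ∑ ℓ ∈ range (d+1),
        ((m+d-1-ℓ).factorial : ℚ) * (ℓ.factorial : ℚ) * qchoose (x+u-ℓ) (d-ℓ) * qchoose x ℓ := by
  have h := congrArg (Lfun m) (key u d x)
  rw [Lfun_sum, Lfun_sum] at h
  have hL : ∑ ℓ ∈ range (d+1), Lfun m (C (qchoose x (d-ℓ) * (u.choose ℓ : ℚ)) * X^ℓ)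
      = ∑ ℓ ∈ range (d+1), qchoose x (d-ℓ) * (u.choose ℓ : ℚ) / ((m:ℚ)+ℓ) := by
    apply Finset.sum_congr rfl
    intro ℓ _
    rw [Lfun_CX]
  have hR : ∑ ℓ ∈ range (d+1),
        Lfun m (C (qchoose (x + u - ℓ) (d-ℓ) * qchoose x ℓ) * (1-X)^ℓ * X^(d-ℓ))
      = (1/((m+d).factorial : ℚ)) * ∑ ℓ ∈ range (d+1),
        ((m+d-1-ℓ).factorial : ℚ) * (ℓ.factorial : ℚ) * qchoose (x+u-ℓ) (d-ℓ) * qchoose x ℓ := by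
    rw [Finset.mul_sum]
    apply Finset.sum_congr rfl
    intro ℓ hℓ
    have hle : ℓ ≤ d := Nat.lt_succ_iff.mp (mem_range.mp hℓ)
    rw [Lfun_term m hm]
    have e1 : m + (d-ℓ) + ℓ = m + d := by omega
    have e2 : m + (d-ℓ) - 1 = m + d - 1 - ℓ := by omega
    rw [e1, e2]
    ring
  rw [hL, hR] at h
  exact h

/-- For positive integers `r ≤ s < n`, a nonnegative integer `u`, and any `0 ≤ i ≤ s−r`,
the following polynomial identity in `t` holds (stated for all rational `t`):
`∑_{ℓ=0}^{s−1} C(t(s−r−i)+s−1−i, s−1−ℓ) C(u, ℓ) / (n−s+ℓ)`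
`= (1/(n−1)!) ∑_{ℓ=0}^{s−1} (n−2−ℓ)! ℓ! C(t(s−r−i)+u+s−1−ℓ−i, s−1−ℓ)
C(t(s−r−i)+s−1−i, ℓ)`. -/
theorem stmt_18 (r s n u i : ℕ) (hr : 1 ≤ r) (hrs : r ≤ s) (hsn : s < n)
    (hi : i ≤ s - r) (t : ℚ) :
    (∑ ℓ ∈ Finset.range s,
        qchoose (t * ((s : ℚ) - r - i) + s - 1 - i) (s - 1 - ℓ) * (u.choose ℓ : ℚ) /
          ((n : ℚ) - s + ℓ))
      = (1 / (Nat.factorial (n - 1) : ℚ)) *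
          ∑ ℓ ∈ Finset.range s,
            (Nat.factorial (n - 2 - ℓ) : ℚ) * (Nat.factorial ℓ : ℚ) *
              qchoose (t * ((s : ℚ) - r - i) + u + s - 1 - ℓ - i) (s - 1 - ℓ) *
              qchoose (t * ((s : ℚ) - r - i) + s - 1 - i) ℓ := by
  have hs1 : 1 ≤ s := le_trans hr hrs
  obtain ⟨d, rfl⟩ : ∃ d, s = d + 1 := ⟨s - 1, by omega⟩
  set m : ℕ := n - (d+1) with hmdef
  have hm1 : 1 ≤ m := by omega
  set x : ℚ := t * (((d+1:ℕ):ℚ) - r - i) + ((d+1:ℕ):ℚ) - 1 - i with hxdef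
  have h := main_identity x u d m hm1
  have hLHS : (∑ ℓ ∈ Finset.range (d+1),
        qchoose (t * (((d+1:ℕ):ℚ) - r - i) + ((d+1:ℕ):ℚ) - 1 - i) (d+1-1-ℓ) * (u.choose ℓ : ℚ) /
          ((n : ℚ) - ((d+1:ℕ):ℚ) + ℓ))
      = ∑ ℓ ∈ range (d+1), qchoose x (d-ℓ) * (u.choose ℓ : ℚ) / ((m:ℚ)+ℓ) := by
    apply Finset.sum_congr rfl
    intro ℓ _
    have hd : d+1-1-ℓ = d-ℓ := by omega
    have hden : (n : ℚ) - ((d+1:ℕ):ℚ) + ℓ = (m:ℚ) + ℓ := by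
      rw [hmdef, Nat.cast_sub (by omega : d+1 ≤ n)]
    rw [hd, hden, hxdef]
  have hRHS : ((1 : ℚ) / (Nat.factorial (n - 1) : ℚ)) *
          ∑ ℓ ∈ Finset.range (d+1),
            (Nat.factorial (n - 2 - ℓ) : ℚ) * (Nat.factorial ℓ : ℚ) *
              qchoose (t * (((d+1:ℕ):ℚ) - r - i) + u + ((d+1:ℕ):ℚ) - 1 - ℓ - i) (d+1-1-ℓ) *
              qchoose (t * (((d+1:ℕ):ℚ) - r - i) + ((d+1:ℕ):ℚ) - 1 - i) ℓ
      = (1/((m+d).factorial : ℚ)) * ∑ ℓ ∈ range (d+1),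
        ((m+d-1-ℓ).factorial : ℚ) * (ℓ.factorial : ℚ) * qchoose (x+u-ℓ) (d-ℓ) * qchoose x ℓ := by
    have hn1 : n - 1 = m + d := by omega
    rw [hn1]
    congr 1
    apply Finset.sum_congr rfl
    intro ℓ _
    have hd : d+1-1-ℓ = d-ℓ := by omega
    have hf : n - 2 - ℓ = m + d - 1 - ℓ := by omega
    have harg : t * (((d+1:ℕ):ℚ) - r - i) + u + ((d+1:ℕ):ℚ) - 1 - ℓ - i = x + u - ℓ := by
      rw [hxdef]; ring
    rw [hd, hf, harg, hxdef]
  rw [hLHS, hRHS] at *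
  exact h
end
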